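/- arXiv:1709.05055 — 5 statements merged into one kernel-verified Lean document; each statement's English description precedes it below -/
import Mathlib

section
/- Let G be a finite simple bipartite graph on n+m vertices (with no isolated vertices) and let J_G be its cover ideal in the polynomial ring over a field K on the vertices of G. Then G is a complete bipartite graph if and only if J_G is generated by a regular sequence. -/
open MvPolynomial

/-- A vertex cover of a simple graph: a set of vertices meeting every edge. -/
def IsVertexCover {V : Type} (G : SimpleGraph V) (w : Finset V) : Prop :=
  ∀ ⦃a b : V⦄, G.Adj a b → a ∈ w ∨ b ∈ w

/-- The cover ideal of a finite simple graph `G`: the ideal of the polynomial ring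
`K[x_v : v ∈ V]` generated by the monomials `∏_{x ∈ w} x` over all vertex covers `w`. -/
noncomputable def coverIdeal (K : Type) [Field K] {V : Type} [Fintype V]
    (G : SimpleGraph V) : Ideal (MvPolynomial V K) :=
  Ideal.span { p | ∃ w : Finset V, IsVertexCover G w ∧ p = ∏ x ∈ w, X x }

/-- The linear map `(c_j) ↦ ∑_j c_j • v_j`. -/
noncomputable def lcomb {R M : Type} [CommRing R] [AddCommGroup M] [Module R M]
    {ι : Type} [Fintype ι] (v : ι → M) : (ι → R) →ₗ[R] M :=
  Fintype.linearCombination R v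

/-- A minimal graded free resolution
`0 → F_len → ⋯ → F_2 → F_1 → R → R/I → 0`
of the quotient of `R = K[x_1,…,x_N]` by a homogeneous ideal `I`, where
`F_i = ⊕_{j < rank i} R(-(deg i j))` is a graded free module.
The map `F_1 → R` sends the `j`-th basis vector to `gen j`, and for `i ≥ 1` the map
`F_{i+1} → F_i` is given by the matrix `mat (i-1)` (acting by `Matrix.mulVec`);
all maps are graded (entries are homogeneous of the appropriate degrees), the
complex is exact at every `F_i`, the image of `F_1 → R` is `I`, and minimality
means that all matrix entries (and the generators) lie in the graded maximal ideal,
i.e. have vanishing constant coefficient. -/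
structure MinimalGradedFreeResolution {K : Type} [Field K] {σ : Type}
    (I : Ideal (MvPolynomial σ K)) where
  len : ℕ
  rank : ℕ → ℕ
  deg : ∀ i : ℕ, Fin (rank i) → ℕ
  gen : Fin (rank 1) → MvPolynomial σ K
  mat : ∀ i : ℕ, Matrix (Fin (rank (i + 1))) (Fin (rank (i + 2))) (MvPolynomial σ K)
  rank_pos : ∀ i, 1 ≤ i → i ≤ len → 0 < rank i
  rank_zero : ∀ i, len < i → rank i = 0
  span_gen : Ideal.span (Set.range gen) = I
  gen_hom : ∀ j, (gen j).IsHomogeneous (deg 1 j)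
  mat_hom : ∀ i p q, mat i p q = 0 ∨
    (deg (i + 1) p ≤ deg (i + 2) q ∧
      (mat i p q).IsHomogeneous (deg (i + 2) q - deg (i + 1) p))
  exact_one : Function.Exact ⇑((mat 0).mulVecLin) ⇑(lcomb gen)
  exact_succ : ∀ i, Function.Exact ⇑((mat (i + 1)).mulVecLin) ⇑((mat i).mulVecLin)
  minimal_gen : ∀ j, constantCoeff (gen j) = 0
  minimal_mat : ∀ i p q, constantCoeff (mat i p q) = 0

namespace MinimalGradedFreeResolution

variable {K : Type} [Field K] {σ : Type} {I : Ideal (MvPolynomial σ K)}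

/-- The Castelnuovo–Mumford regularity of the ideal `I`, read off from a minimal graded
free resolution of `R/I`: `reg I = max_{i ≥ 0} (t_i(I) - i)` where
`t_i(I) = t_{i+1}(R/I)` is the largest twist in homological degree `i + 1`. -/
def regIdeal (res : MinimalGradedFreeResolution I) : ℕ :=
  Finset.sup (Finset.range res.len)
    (fun i => (Finset.univ.sup fun j => res.deg (i + 1) j) - i)

/-- The Castelnuovo–Mumford regularity of the module `R/I`, read off from a minimal graded
free resolution: `reg (R/I) = max_{i ≥ 0} (t_i(R/I) - i)` (the `i = 0` term is `0`). -/
def regQuot (res : MinimalGradedFreeResolution I) : ℕ :=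
  Finset.sup (Finset.range res.len)
    (fun i => (Finset.univ.sup fun j => res.deg (i + 1) j) - (i + 1))

end MinimalGradedFreeResolution

/-- The minimal number of generators of an ideal. -/
noncomputable def muIdeal {R : Type} [CommRing R] (I : Ideal R) : ℕ :=
  sInf {k | ∃ s : Finset R, s.card = k ∧ Ideal.span (s : Set R) = I}

/-- The Hilbert function of `R/I` for a homogeneous ideal `I` of `R = K[x_1,…,x_N]`:
`d ↦ dim_K (R/I)_d = dim_K R_d - dim_K I_d`. -/
noncomputable def hilbQuot {K : Type} [Field K] {σ : Type}
    (I : Ideal (MvPolynomial σ K)) (d : ℕ) : ℕ :=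
  Module.finrank K (homogeneousSubmodule σ K d) -
    Module.finrank K
      ((Submodule.restrictScalars K (I : Submodule (MvPolynomial σ K) (MvPolynomial σ K)) ⊓
        homogeneousSubmodule σ K d : Submodule K (MvPolynomial σ K)))

/-- `f 0, …, f (k-1)` is a regular sequence on `R`: each `f i` is a nonzerodivisor
modulo the previous ones, and the `f i` generate a proper ideal. -/
def IsRegSeq {R : Type} [CommRing R] {k : ℕ} (f : Fin k → R) : Prop :=
  (∀ i : Fin k, ∀ r : R, f i * r ∈ Ideal.span (f '' {j | j < i}) →
      r ∈ Ideal.span (f '' {j | j < i})) ∧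
  Ideal.span (Set.range f) ≠ ⊤

/-- The bipartite graph on `{x_1,…,x_n} ⊔ {y_1,…,y_n}` (vertices `0`-indexed) with edges
`{x_1, y_j}` for `1 ≤ j ≤ n` and `{x_i, y_i}` for `2 ≤ i ≤ n`. -/
def bipartiteFan (n : ℕ) : SimpleGraph (Fin n ⊕ Fin n) :=
  SimpleGraph.fromRel (fun a b => ∃ i j : Fin n,
    a = Sum.inl i ∧ b = Sum.inr j ∧ ((i : ℕ) = 0 ∨ i = j))

/-- The bipartite graph `K_{U₁, V} ∪ K_{U₂, V₂}` on `U ⊔ V`, where `U = U₁ ⊔ U₂` with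
`|U₁| = n₁`, `|U₂| = n₂` (`U₁` consists of the first `n₁` indices) and `V = V₁ ⊔ V₂` with
`|V₁| = m₁`, `|V₂| = m₂` (`V₂` consists of the last `m₂` indices). -/
def twoBlockBipartite (n₁ n₂ m₁ m₂ : ℕ) :
    SimpleGraph (Fin (n₁ + n₂) ⊕ Fin (m₁ + m₂)) :=
  SimpleGraph.fromRel (fun a b => ∃ (i : Fin (n₁ + n₂)) (j : Fin (m₁ + m₂)),
    a = Sum.inl i ∧ b = Sum.inr j ∧ ((i : ℕ) < n₁ ∨ (n₁ ≤ (i : ℕ) ∧ m₁ ≤ (j : ℕ))))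

/-- The index of the part containing a vertex of the complete tripartite graph. -/
def part3 {m₁ m₂ m₃ : ℕ} : Fin m₁ ⊕ Fin m₂ ⊕ Fin m₃ → ℕ :=
  Sum.elim (fun _ => 0) (Sum.elim (fun _ => 1) (fun _ => 2))

/-- The complete tripartite graph with parts of sizes `m₁, m₂, m₃`:
two vertices are adjacent iff they lie in different parts. -/
def completeTripartite (m₁ m₂ m₃ : ℕ) : SimpleGraph (Fin m₁ ⊕ Fin m₂ ⊕ Fin m₃) :=
  SimpleGraph.fromRel (fun a b => part3 a ≠ part3 b)

/-- The index of the part containing a vertex of the complete 4-partite graph. -/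
def part4 {m₁ m₂ m₃ m₄ : ℕ} : Fin m₁ ⊕ Fin m₂ ⊕ Fin m₃ ⊕ Fin m₄ → ℕ :=
  Sum.elim (fun _ => 0) (Sum.elim (fun _ => 1) (Sum.elim (fun _ => 2) (fun _ => 3)))

/-- The complete 4-partite graph with parts of sizes `m₁, m₂, m₃, m₄`:
two vertices are adjacent iff they lie in different parts. -/
def complete4Partite (m₁ m₂ m₃ m₄ : ℕ) :
    SimpleGraph (Fin m₁ ⊕ Fin m₂ ⊕ Fin m₃ ⊕ Fin m₄) :=
  SimpleGraph.fromRel (fun a b => part4 a ≠ part4 b)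

section CIAux

open Finset

variable {K : Type} [Field K] {σ : Type}

/-- The exponent vector of a squarefree monomial supported on `w`. -/
noncomputable def ciInd (w : Finset σ) : σ →₀ ℕ := ∑ x ∈ w, Finsupp.single x 1

lemma ciInd_apply [DecidableEq σ] (w : Finset σ) (x : σ) :
    ciInd w x = if x ∈ w then 1 else 0 := by
  classical
  rw [ciInd, Finsupp.finset_sum_apply]
  rw [Finset.sum_congr rfl (fun y _ => Finsupp.single_apply)]
  simp

lemma ciInd_le [DecidableEq σ] {w w' : Finset σ} : ciInd w ≤ ciInd w' ↔ w ⊆ w' := by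
  constructor
  · intro h x hx
    have hx2 := h x
    rw [ciInd_apply, ciInd_apply, if_pos hx] at hx2
    by_contra hn
    rw [if_neg hn] at hx2
    omega
  · intro h x
    rw [ciInd_apply, ciInd_apply]
    split_ifs with h1 h2
    · omega
    · exact absurd (h h1) h2
    · omega
    · omega

lemma ciInd_inj [DecidableEq σ] {w w' : Finset σ} (h : ciInd w = ciInd w') : w = w' :=
  Finset.Subset.antisymm (ciInd_le.mp h.le) (ciInd_le.mp h.ge)

lemma ciProd (w : Finset σ) :
    (∏ x ∈ w, X x : MvPolynomial σ K) = monomial (ciInd w) 1 := by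
  classical
  induction w using Finset.induction_on with
  | empty => simp [ciInd]
  | insert _ _ ha ih =>
      rw [Finset.prod_insert ha, ih]
      simp only [ciInd]
      rw [Finset.sum_insert ha, X, monomial_mul, one_mul]

lemma ci_monomial_one_dvd_iff {s : σ →₀ ℕ} {p : MvPolynomial σ K} :
    monomial s (1 : K) ∣ p ↔ ∀ d ∈ p.support, s ≤ d := by
  constructor
  · rintro ⟨c, rfl⟩ d hd
    rw [MvPolynomial.mem_support_iff] at hd
    by_contra hle
    rw [show monomial s (1:K) * c = c * monomial s 1 by ring, coeff_mul_monomial',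
      if_neg hle] at hd
    exact hd rfl
  · intro h
    refine ⟨∑ d ∈ p.support, monomial (d - s) (coeff d p), ?_⟩
    rw [Finset.mul_sum]
    conv_lhs => rw [p.as_sum]
    refine Finset.sum_congr rfl fun d hd => ?_
    rw [monomial_mul, one_mul, add_tsub_cancel_of_le (h d hd)]

lemma ci_dvd_cancel {s1 s2 : σ →₀ ℕ} (hdis : ∀ x, s1 x = 0 ∨ s2 x = 0)
    {p : MvPolynomial σ K} (h : monomial s1 (1 : K) ∣ p * monomial s2 1) :
    monomial s1 (1 : K) ∣ p := by
  rw [ci_monomial_one_dvd_iff] at h ⊢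
  intro d hd
  have hmem : d + s2 ∈ (p * monomial s2 (1 : K)).support := by
    rw [MvPolynomial.mem_support_iff, coeff_mul_monomial]
    simpa using MvPolynomial.mem_support_iff.mp hd
  have h2 := h _ hmem
  intro x
  have hx := h2 x
  rw [Finsupp.add_apply] at hx
  rcases hdis x with h1 | h1 <;> omega

/-- Coefficients at exponents of minimal covers vanish on `𝔪 · J`. -/
lemma ci_coeff_vanish [Fintype σ] [DecidableEq σ] {G : SimpleGraph σ} {wt : Finset σ}
    (hmin : ∀ w : Finset σ, IsVertexCover G w → w ⊆ wt → w = wt)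
    {g : MvPolynomial σ K} (hg : g ∈ coverIdeal K G) :
    ∀ r : MvPolynomial σ K, constantCoeff r = 0 → coeff (ciInd wt) (r * g) = 0 := by
  refine Submodule.span_induction ?_ ?_ ?_ ?_ hg
  · rintro p ⟨w, hw, rfl⟩ r hr
    rw [ciProd, coeff_mul_monomial']
    split_ifs with hle
    · have hww : w = wt := hmin w hw (ciInd_le.mp hle)
      subst hww
      have : ciInd w - ciInd w = 0 := tsub_self _
      rw [this, mul_one]
      exact hr
    · rfl
  · intro r _
    simp
  · intro a b _ _ ha hb r hr
    rw [mul_add, MvPolynomial.coeff_add, ha r hr, hb r hr, add_zero]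
  · intro a b _ hb r hr
    rw [smul_eq_mul, show r * (a * b) = (r * a) * b by ring]
    exact hb (r * a) (by rw [map_mul, hr, zero_mul])

/-- No three elements of an ideal generated by two elements form a regular sequence
(unless the ambient ideal is the unit ideal). -/
lemma ci_reg3 {R : Type} [CommRing R] {u v f0 f1 f2 : R}
    (h0 : ∀ r : R, f0 * r = 0 → r = 0)
    (h1 : ∀ r : R, f1 * r ∈ Ideal.span {f0} → r ∈ Ideal.span {f0})
    (h2 : ∀ r : R, f2 * r ∈ Ideal.span {f0, f1} → r ∈ Ideal.span {f0, f1})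
    (hf0 : f0 ∈ Ideal.span ({u, v} : Set R)) (hf1 : f1 ∈ Ideal.span ({u, v} : Set R))
    (hf2 : f2 ∈ Ideal.span ({u, v} : Set R)) :
    (1 : R) ∈ Ideal.span ({u, v} : Set R) := by
  obtain ⟨a0, b0, hab0⟩ := Ideal.mem_span_pair.mp hf0
  obtain ⟨a1, b1, hab1⟩ := Ideal.mem_span_pair.mp hf1
  obtain ⟨a2, b2, hab2⟩ := Ideal.mem_span_pair.mp hf2
  have hEmem : a0 * b1 - a1 * b0 ∈ Ideal.span ({f0, f1} : Set R) := by
    apply h2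
    refine Ideal.mem_span_pair.mpr ⟨a2 * b1 - b2 * a1, b2 * a0 - a2 * b0, ?_⟩
    rw [← hab0, ← hab1, ← hab2]
    ring
  obtain ⟨p, q, hpq⟩ := Ideal.mem_span_pair.mp hEmem
  have hc : b0 + q * u ∈ Ideal.span ({f0} : Set R) := by
    apply h1
    rw [Ideal.mem_span_singleton]
    refine ⟨b1 - p * u, ?_⟩
    linear_combination u * hpq - b0 * hab1 + b1 * hab0
  have hd : a0 - q * v ∈ Ideal.span ({f0} : Set R) := by
    apply h1
    rw [Ideal.mem_span_singleton]
    refine ⟨a1 + p * v, ?_⟩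
    linear_combination (-v) * hpq - a0 * hab1 + a1 * hab0
  obtain ⟨c, hc'⟩ := Ideal.mem_span_singleton.mp hc
  obtain ⟨d, hd'⟩ := Ideal.mem_span_singleton.mp hd
  have hz : f0 * (1 - d * u - c * v) = 0 := by
    linear_combination (-1 : R) * hab0 + u * hd' + v * hc'
  have h1eq := h0 _ hz
  exact Ideal.mem_span_pair.mpr ⟨d, c, by linear_combination (-1 : R) * h1eq⟩

/-- Every vertex cover contains a minimal vertex cover. -/
lemma ci_exists_min_cover {V : Type} [DecidableEq V] (G : SimpleGraph V) :
    ∀ w : Finset V, IsVertexCover G w →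
      ∃ w', w' ⊆ w ∧ IsVertexCover G w' ∧ ∀ w'' : Finset V,
        IsVertexCover G w'' → w'' ⊆ w' → w'' = w' := by
  intro w
  induction w using Finset.strongInduction with
  | _ w ih =>
    intro hw
    by_cases h : ∃ w0, w0 ⊂ w ∧ IsVertexCover G w0
    · obtain ⟨w0, hsub, hc⟩ := h
      obtain ⟨w', h1, h2, h3⟩ := ih w0 hsub hc
      exact ⟨w', h1.trans hsub.subset, h2, h3⟩
    · refine ⟨w, Finset.Subset.refl w, hw, fun w'' hc hsub => ?_⟩
      by_contra hne
      exact h ⟨w'', ssubset_of_subset_of_ne hsub hne, hc⟩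

end CIAux

/-- A bipartite graph (with both parts nonempty and no isolated vertices)
is complete bipartite if and only if its cover ideal is generated by a regular sequence. -/
theorem coverIdeal_regularSequence_iff_completeBipartite
    (K : Type) [Field K] (n m : ℕ) (hn : 1 ≤ n) (hm : 1 ≤ m)
    (G : SimpleGraph (Fin n ⊕ Fin m))
    (hbipL : ∀ i j : Fin n, ¬ G.Adj (Sum.inl i) (Sum.inl j))
    (hbipR : ∀ i j : Fin m, ¬ G.Adj (Sum.inr i) (Sum.inr j))
    (hiso : ∀ v, ∃ u, G.Adj v u) :
    G = completeBipartiteGraph (Fin n) (Fin m) ↔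
      ∃ (k : ℕ) (f : Fin k → MvPolynomial (Fin n ⊕ Fin m) K),
        IsRegSeq f ∧ Ideal.span (Set.range f) = coverIdeal K G := by
  classical
  constructor
  · -- forward direction
    intro hG
    subst hG
    set wL : Finset (Fin n ⊕ Fin m) := Finset.univ.image Sum.inl with hwLdef
    set wR : Finset (Fin n ⊕ Fin m) := Finset.univ.image Sum.inr with hwRdef
    have hmemL : ∀ i : Fin n, Sum.inl i ∈ wL := fun i =>
      Finset.mem_image.mpr ⟨i, Finset.mem_univ _, rfl⟩
    have hmemR : ∀ j : Fin m, Sum.inr j ∈ wR := fun j =>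
      Finset.mem_image.mpr ⟨j, Finset.mem_univ _, rfl⟩
    have hnotL : ∀ j : Fin m, Sum.inr j ∉ wL := by
      intro j hj
      obtain ⟨i, -, h⟩ := Finset.mem_image.mp hj
      simp at h
    have hnotR : ∀ i : Fin n, Sum.inl i ∉ wR := by
      intro i hi
      obtain ⟨j, -, h⟩ := Finset.mem_image.mp hi
      simp at h
    set mL : MvPolynomial (Fin n ⊕ Fin m) K := monomial (ciInd wL) 1 with hmLdef
    set mR : MvPolynomial (Fin n ⊕ Fin m) K := monomial (ciInd wR) 1 with hmRdef
    have hcovL : IsVertexCover (completeBipartiteGraph (Fin n) (Fin m)) wL := by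
      intro a b hadj
      rcases a with i | i <;> rcases b with j | j
      · simp at hadj
      · exact Or.inl (hmemL i)
      · exact Or.inr (hmemL j)
      · simp at hadj
    have hcovR : IsVertexCover (completeBipartiteGraph (Fin n) (Fin m)) wR := by
      intro a b hadj
      rcases a with i | i <;> rcases b with j | j
      · simp at hadj
      · exact Or.inr (hmemR j)
      · exact Or.inl (hmemR i)
      · simp at hadj
    have hdis : ∀ x : Fin n ⊕ Fin m, ciInd wL x = 0 ∨ ciInd wR x = 0 := by
      intro x
      rcases x with i | j
      · right; rw [ciInd_apply, if_neg (hnotR i)]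
      · left; rw [ciInd_apply, if_neg (hnotL j)]
    have hLne : mL ≠ 0 := by
      rw [hmLdef]
      simp [MvPolynomial.monomial_eq_zero]
    have hconst : ∀ w0 : Finset (Fin n ⊕ Fin m), w0.Nonempty →
        constantCoeff (monomial (ciInd w0) (1 : K)) = 0 := by
      intro w0 ⟨x0, hx0⟩
      rw [constantCoeff_monomial, if_neg]
      intro h
      have := DFunLike.congr_fun h x0
      rw [ciInd_apply, if_pos hx0] at this
      simp at this
    have hsetA : ∀ t0 : Fin 2, (t0 : ℕ) = 0 → {j : Fin 2 | j < t0} = (∅ : Set (Fin 2)) := by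
      intro t0 h
      ext x
      simp [Fin.lt_def, h]
    have hsetB : ∀ t0 : Fin 2, (t0 : ℕ) = 1 →
        {j : Fin 2 | j < t0} = ({0} : Set (Fin 2)) := by
      intro t0 h
      ext x
      simp only [Set.mem_setOf_eq, Set.mem_singleton_iff, Fin.lt_def, h, Fin.ext_iff,
        Fin.val_zero]
      omega
    refine ⟨2, ![mL, mR], ⟨?_, ?_⟩, ?_⟩
    · intro t r hr
      fin_cases t
      · rw [hsetA _ rfl, Set.image_empty, Ideal.span_empty, Ideal.mem_bot] at hr ⊢
        rcases mul_eq_zero.mp hr with h | h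
        · exact absurd h hLne
        · exact h
      · rw [hsetB _ rfl, Set.image_singleton] at hr ⊢
        rw [Ideal.mem_span_singleton] at hr ⊢
        have hr2 : monomial (ciInd wL) (1 : K) ∣ r * monomial (ciInd wR) 1 := by
          obtain ⟨c, hc⟩ := hr
          exact ⟨c, by rw [mul_comm r (monomial (ciInd wR) (1 : K))]; exact hc⟩
        exact ci_dvd_cancel hdis hr2
    · intro htop
      have h1m : (1 : MvPolynomial (Fin n ⊕ Fin m) K) ∈
          Ideal.span (Set.range ![mL, mR]) := by
        rw [htop]; trivial
      have hsub : Set.range ![mL, mR] ⊆ ({mL, mR} : Set (MvPolynomial (Fin n ⊕ Fin m) K)) := by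
        rintro _ ⟨t, rfl⟩
        fin_cases t
        · exact Set.mem_insert _ _
        · exact Set.mem_insert_iff.mpr (Or.inr rfl)
      have h1m2 := Ideal.span_mono hsub h1m
      obtain ⟨a, b, hab⟩ := Ideal.mem_span_pair.mp h1m2
      have hcc := congrArg constantCoeff hab
      rw [map_add, map_mul, map_mul, hmLdef, hmRdef, hconst wL ⟨Sum.inl ⟨0, hn⟩, hmemL _⟩,
        hconst wR ⟨Sum.inr ⟨0, hm⟩, hmemR _⟩, mul_zero, mul_zero, add_zero, map_one] at hcc
      exact one_ne_zero hcc.symm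
    · apply le_antisymm
      · rw [Ideal.span_le]
        rintro _ ⟨t, rfl⟩
        fin_cases t
        · exact Ideal.subset_span ⟨wL, hcovL, by rw [ciProd]; simp; exact hmLdef⟩
        · exact Ideal.subset_span ⟨wR, hcovR, by rw [ciProd]; simp; exact hmRdef⟩
      · rw [coverIdeal, Ideal.span_le]
        rintro p ⟨w0, hw0, rfl⟩
        have hsub : wL ⊆ w0 ∨ wR ⊆ w0 := by
          by_contra hcon
          push_neg at hcon
          obtain ⟨h1, h2⟩ := hcon
          obtain ⟨x, hx1, hx2⟩ := Finset.not_subset.mp h1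
          obtain ⟨y, hy1, hy2⟩ := Finset.not_subset.mp h2
          rw [hwLdef] at hx1
          rw [hwRdef] at hy1
          obtain ⟨i, -, rfl⟩ := Finset.mem_image.mp hx1
          obtain ⟨j, -, rfl⟩ := Finset.mem_image.mp hy1
          have hadj : (completeBipartiteGraph (Fin n) (Fin m)).Adj (Sum.inl i) (Sum.inr j) := by
            simp
          rcases hw0 hadj with h | h
          · exact hx2 h
          · exact hy2 h
        have hmemf : ∀ t : Fin 2, (![mL, mR] t) ∈ Ideal.span (Set.range ![mL, mR]) :=
          fun t => Ideal.subset_span ⟨t, rfl⟩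
        rcases hsub with h | h
        · obtain ⟨c, hc⟩ := Finset.prod_dvd_prod_of_subset wL w0
            (fun x => (X x : MvPolynomial (Fin n ⊕ Fin m) K)) h
          rw [hc, ciProd]
          exact Ideal.mul_mem_right _ _ (hmemf 0)
        · obtain ⟨c, hc⟩ := Finset.prod_dvd_prod_of_subset wR w0
            (fun x => (X x : MvPolynomial (Fin n ⊕ Fin m) K)) h
          rw [hc, ciProd]
          exact Ideal.mul_mem_right _ _ (hmemf 1)
  · -- backward direction
    rintro ⟨k, f, ⟨hreg, hnetop⟩, hspan⟩
    have hfJ : ∀ t, f t ∈ coverIdeal K G := fun t =>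
      hspan ▸ Ideal.subset_span (Set.mem_range_self t)
    have hnbL : ∀ i : Fin n, ∃ j : Fin m, G.Adj (Sum.inl i) (Sum.inr j) := by
      intro i
      obtain ⟨u, hu⟩ := hiso (Sum.inl i)
      cases u with
      | inl i' => exact absurd hu (hbipL i i')
      | inr j' => exact ⟨j', hu⟩
    have hnbR : ∀ j : Fin m, ∃ i : Fin n, G.Adj (Sum.inr j) (Sum.inl i) := by
      intro j
      obtain ⟨u, hu⟩ := hiso (Sum.inr j)
      cases u with
      | inl i' => exact ⟨i', hu⟩
      | inr j' => exact absurd hu (hbipR j j')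
    have hAdj : ∀ (i : Fin n) (j : Fin m), G.Adj (Sum.inl i) (Sum.inr j) := by
      by_contra hcon
      push_neg at hcon
      obtain ⟨i, j, hnadj⟩ := hcon
      obtain ⟨j0, hadj0⟩ := hnbL i
      have hsP : coverIdeal K G ≤
          Ideal.span ({X (Sum.inl i), X (Sum.inr j0)} :
            Set (MvPolynomial (Fin n ⊕ Fin m) K)) := by
        rw [coverIdeal, Ideal.span_le]
        rintro p ⟨w0, hw0, rfl⟩
        rcases hw0 hadj0 with h | h
        · obtain ⟨c, hc⟩ := Finset.dvd_prod_of_mem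
            (fun x => (X x : MvPolynomial (Fin n ⊕ Fin m) K)) h
          exact Ideal.mem_span_pair.mpr ⟨c, 0, by rw [hc]; ring⟩
        · obtain ⟨c, hc⟩ := Finset.dvd_prod_of_mem
            (fun x => (X x : MvPolynomial (Fin n ⊕ Fin m) K)) h
          exact Ideal.mem_span_pair.mpr ⟨0, c, by rw [hc]; ring⟩
      have hPne : (1 : MvPolynomial (Fin n ⊕ Fin m) K) ∉
          Ideal.span ({X (Sum.inl i), X (Sum.inr j0)} :
            Set (MvPolynomial (Fin n ⊕ Fin m) K)) := by
        intro h1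
        obtain ⟨a, b, hab⟩ := Ideal.mem_span_pair.mp h1
        have hcc := congrArg constantCoeff hab
        rw [map_add, map_mul, map_mul, constantCoeff_X, constantCoeff_X, mul_zero,
          mul_zero, add_zero, map_one] at hcc
        exact one_ne_zero hcc.symm
      rcases lt_or_ge k 3 with hk | hk
      · -- k ≤ 2 : the cover ideal needs at least 3 generators
        set wL : Finset (Fin n ⊕ Fin m) := Finset.univ.image Sum.inl with hwLdef
        set wR : Finset (Fin n ⊕ Fin m) := Finset.univ.image Sum.inr with hwRdef
        have hmemL : ∀ i' : Fin n, Sum.inl i' ∈ wL := fun i' =>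
          Finset.mem_image.mpr ⟨i', Finset.mem_univ _, rfl⟩
        have hmemR : ∀ j' : Fin m, Sum.inr j' ∈ wR := fun j' =>
          Finset.mem_image.mpr ⟨j', Finset.mem_univ _, rfl⟩
        have hnotL : ∀ j' : Fin m, Sum.inr j' ∉ wL := by
          intro j' hj
          obtain ⟨i', -, h⟩ := Finset.mem_image.mp hj
          simp at h
        have hnotR : ∀ i' : Fin n, Sum.inl i' ∉ wR := by
          intro i' hi
          obtain ⟨j', -, h⟩ := Finset.mem_image.mp hi
          simp at h
        have hcovL : IsVertexCover G wL := by
          intro a b hadj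
          rcases a with i' | i' <;> rcases b with j' | j'
          · exact absurd hadj (hbipL _ _)
          · exact Or.inl (hmemL _)
          · exact Or.inr (hmemL _)
          · exact absurd hadj (hbipR _ _)
        have hcovR : IsVertexCover G wR := by
          intro a b hadj
          rcases a with i' | i' <;> rcases b with j' | j'
          · exact absurd hadj (hbipL _ _)
          · exact Or.inr (hmemR _)
          · exact Or.inl (hmemR _)
          · exact absurd hadj (hbipR _ _)
        have hminL : ∀ w', IsVertexCover G w' → w' ⊆ wL → w' = wL := by
          intro w' hc hsub
          apply Finset.Subset.antisymm hsub
          intro x hx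
          rw [hwLdef] at hx
          obtain ⟨i', -, rfl⟩ := Finset.mem_image.mp hx
          obtain ⟨j', hadj⟩ := hnbL i'
          rcases hc hadj with h | h
          · exact h
          · exact absurd (hsub h) (hnotL j')
        have hminR : ∀ w', IsVertexCover G w' → w' ⊆ wR → w' = wR := by
          intro w' hc hsub
          apply Finset.Subset.antisymm hsub
          intro x hx
          rw [hwRdef] at hx
          obtain ⟨j', -, rfl⟩ := Finset.mem_image.mp hx
          obtain ⟨i', hadj⟩ := hnbR j'
          rcases hc hadj with h | h
          · exact h
          · exact absurd (hsub h) (hnotR i')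
        have hcov3c : IsVertexCover G (Finset.univ \ {Sum.inl i, Sum.inr j}) := by
          intro a b hadj
          by_contra hcon2
          push_neg at hcon2
          obtain ⟨ha, hb⟩ := hcon2
          simp only [Finset.mem_sdiff, Finset.mem_univ, true_and, not_not,
            Finset.mem_insert, Finset.mem_singleton] at ha hb
          rcases ha with rfl | rfl <;> rcases hb with rfl | rfl
          · exact hadj.ne rfl
          · exact hnadj hadj
          · exact hnadj hadj.symm
          · exact hadj.ne rfl
        obtain ⟨w3, hw3sub, hw3cov, hw3min⟩ :=
          ci_exists_min_cover G (Finset.univ \ {Sum.inl i, Sum.inr j}) hcov3c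
        have hi3 : Sum.inl i ∉ w3 := by
          intro h
          have := hw3sub h
          simp at this
        have hj3 : Sum.inr j ∉ w3 := by
          intro h
          have := hw3sub h
          simp at this
        have hd01 : wL ≠ wR := fun h => (hnotR ⟨0, hn⟩) (h ▸ hmemL ⟨0, hn⟩)
        have hd02 : wL ≠ w3 := fun h => hi3 (h ▸ hmemL i)
        have hd12 : wR ≠ w3 := fun h => hj3 (h ▸ hmemR j)
        set w : Fin 3 → Finset (Fin n ⊕ Fin m) := ![wL, wR, w3] with hwdef
        have hwcov : ∀ t : Fin 3, IsVertexCover G (w t) := by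
          intro t
          fin_cases t
          · exact hcovL
          · exact hcovR
          · exact hw3cov
        have hwmin : ∀ t : Fin 3, ∀ w', IsVertexCover G w' → w' ⊆ w t → w' = w t := by
          intro t
          fin_cases t
          · exact hminL
          · exact hminR
          · exact fun w' h1 h2 => hw3min w' h1 h2
        have hinj : Function.Injective w := by
          intro t t' h
          fin_cases t <;> fin_cases t' <;>
            first
              | rfl
              | exact absurd h hd01
              | exact absurd h hd02
              | exact absurd h hd12
              | exact absurd h hd01.symm
              | exact absurd h hd02.symm
              | exact absurd h hd12.symm
        have hmemW : ∀ t : Fin 3,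
            (fun t' : Fin 3 => coeff (ciInd (w t')) (monomial (ciInd (w t)) (1 : K))) ∈
              Submodule.span K (Set.range fun t2 : Fin k =>
                (fun t' : Fin 3 => coeff (ciInd (w t')) (f t2))) := by
          intro t
          have hmem : monomial (ciInd (w t)) (1 : K) ∈ Ideal.span (Set.range f) := by
            rw [hspan]
            exact Ideal.subset_span ⟨w t, hwcov t, (ciProd (w t)).symm⟩
          obtain ⟨c, hc⟩ := (Submodule.mem_span_range_iff_exists_fun _).mp hmem
          have hΛeq : ∀ t' : Fin 3, coeff (ciInd (w t')) (monomial (ciInd (w t)) (1 : K)) =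
              ∑ t2, constantCoeff (c t2) * coeff (ciInd (w t')) (f t2) := by
            intro t'
            rw [← hc]
            rw [show (∑ t2, c t2 • f t2) = ∑ t2, ((MvPolynomial.C (constantCoeff (c t2))) *
                f t2 + (c t2 - MvPolynomial.C (constantCoeff (c t2))) * f t2) from
              Finset.sum_congr rfl (fun t2 _ => by rw [smul_eq_mul]; ring)]
            rw [MvPolynomial.coeff_sum]
            refine Finset.sum_congr rfl fun t2 _ => ?_
            rw [MvPolynomial.coeff_add, MvPolynomial.coeff_C_mul,
              ci_coeff_vanish (hwmin t') (hfJ t2) _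
                (by rw [map_sub, constantCoeff_C, sub_self]), add_zero]
          have hsm : (fun t' : Fin 3 => coeff (ciInd (w t')) (monomial (ciInd (w t)) (1 : K))) =
              ∑ t2, constantCoeff (c t2) • (fun t' : Fin 3 => coeff (ciInd (w t')) (f t2)) := by
            funext t'
            rw [Finset.sum_apply]
            simpa using hΛeq t'
          rw [hsm]
          exact Submodule.sum_mem _ fun t2 _ =>
            Submodule.smul_mem _ _ (Submodule.subset_span ⟨t2, rfl⟩)
        have hsingle : ∀ t : Fin 3,
            (fun t' : Fin 3 => coeff (ciInd (w t')) (monomial (ciInd (w t)) (1 : K))) =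
              Pi.single t (1 : K) := by
          intro t
          funext t'
          rw [MvPolynomial.coeff_monomial]
          by_cases h : t' = t
          · subst h
            rw [if_pos rfl, Pi.single_eq_same]
          · rw [if_neg (fun hh => h (hinj (ciInd_inj hh)).symm), Pi.single_eq_of_ne h]
        have hWtop : Submodule.span K (Set.range fun t2 : Fin k =>
            (fun t' : Fin 3 => coeff (ciInd (w t')) (f t2))) = ⊤ := by
          apply le_antisymm le_top
          rw [← (Pi.basisFun K (Fin 3)).span_eq]
          apply Submodule.span_le.mpr
          rintro _ ⟨t, rfl⟩
          rw [Pi.basisFun_apply]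
          rw [← hsingle t]
          exact hmemW t
        have hle : Module.finrank K (Submodule.span K (Set.range fun t2 : Fin k =>
            (fun t' : Fin 3 => coeff (ciInd (w t')) (f t2)))) ≤ k := by
          refine le_trans (finrank_span_le_card _) ?_
          rw [Set.toFinset_range]
          refine le_trans (Finset.card_image_le) ?_
          simp
        rw [hWtop, finrank_top, Module.finrank_fintype_fun_eq_card, Fintype.card_fin] at hle
        omega
      · -- k ≥ 3 : three elements in an ideal generated by two elements
        have hk0 : 0 < k := by omega
        have hk1 : 1 < k := by omega
        have hk2 : 2 < k := by omega
        have hs0 : {j' : Fin k | j' < ⟨0, hk0⟩} = (∅ : Set (Fin k)) := by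
          ext x
          simp [Fin.lt_def]
        have hs1 : {j' : Fin k | j' < ⟨1, hk1⟩} = ({⟨0, hk0⟩} : Set (Fin k)) := by
          ext x
          simp only [Set.mem_setOf_eq, Set.mem_singleton_iff, Fin.lt_def, Fin.ext_iff]
          omega
        have hs2 : {j' : Fin k | j' < ⟨2, hk2⟩} =
            ({⟨0, hk0⟩, ⟨1, hk1⟩} : Set (Fin k)) := by
          ext x
          simp only [Set.mem_setOf_eq, Set.mem_insert_iff, Set.mem_singleton_iff,
            Fin.lt_def, Fin.ext_iff]
          omega
        have h0 : ∀ r, f ⟨0, hk0⟩ * r = 0 → r = 0 := by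
          intro r hr
          have := hreg ⟨0, hk0⟩ r
            (by rw [hs0, Set.image_empty, Ideal.span_empty, Ideal.mem_bot]; exact hr)
          rwa [hs0, Set.image_empty, Ideal.span_empty, Ideal.mem_bot] at this
        have h1 : ∀ r, f ⟨1, hk1⟩ * r ∈ Ideal.span {f ⟨0, hk0⟩} →
            r ∈ Ideal.span {f ⟨0, hk0⟩} := by
          intro r hr
          have := hreg ⟨1, hk1⟩ r (by rw [hs1, Set.image_singleton]; exact hr)
          rwa [hs1, Set.image_singleton] at this
        have h2 : ∀ r, f ⟨2, hk2⟩ * r ∈ Ideal.span {f ⟨0, hk0⟩, f ⟨1, hk1⟩} →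
            r ∈ Ideal.span {f ⟨0, hk0⟩, f ⟨1, hk1⟩} := by
          intro r hr
          have := hreg ⟨2, hk2⟩ r (by rw [hs2, Set.image_pair]; exact hr)
          rwa [hs2, Set.image_pair] at this
        exact hPne (ci_reg3 h0 h1 h2 (hsP (hfJ _)) (hsP (hfJ _)) (hsP (hfJ _)))
    ext a b
    cases a with
    | inl i =>
      cases b with
      | inl i' => simp [hbipL i i']
      | inr j => simp [hAdj i j]
    | inr j =>
      cases b with
      | inl i => simp [(hAdj i j).symm]
      | inr j' => simp [hbipR j j']
end

section
/- Let J = J_{K_{m,n}} be the cover ideal of the complete bipartite graph K_{m,n} with m ≤ n, in the polynomial ring R over a field K on its m+n vertices. Then for all s ≥ 1, the Castelnuovo–Mumford regularity reg(J^s) = sn + m − 1. -/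
open MvPolynomial

namespace CIAux


theorem prime_X {K : Type} [Field K] {σ : Type} [DecidableEq σ] (v : σ) :
    Prime (X v : MvPolynomial σ K) := by
  set e : Option {x : σ // x ≠ v} ≃ σ := Equiv.optionSubtypeNe v with he
  have h1 : Prime (X (none : Option {x : σ // x ≠ v}) : MvPolynomial _ K) := by
    rw [← MulEquiv.prime_iff (optionEquivLeft K {x : σ // x ≠ v})]
    simpa [optionEquivLeft_X_none] using Polynomial.prime_X
  have h2 := (MulEquiv.prime_iff (renameEquiv K e)).mpr h1
  simpa [e] using h2

theorem key {R : Type} [CommRing R] [IsDomain R] (a b : R) (ha : a ≠ 0)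
    (hrel : ∀ c : R, ∀ k : ℕ, a ∣ c * b ^ k → a ∣ c) :
    ∀ (s : ℕ) (c : ℕ → R), ∑ j ∈ Finset.range (s+1), c j * a^j * b^(s-j) = 0 →
    ∃ D : ℕ → R, (∀ p, s ≤ p → D p = 0) ∧
      ∀ p ≤ s, c p = a * D p - (if p = 0 then 0 else b * D (p-1)) := by
  intro s
  induction s with
  | zero =>
    intro c h
    rw [zero_add, Finset.sum_range_one] at h
    simp only [Nat.sub_self, pow_zero, mul_one] at h
    exact ⟨0, fun p _ => rfl, fun p hp => by
      interval_cases p; simp [h]⟩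
  | succ s IH =>
    intro c h
    rw [Finset.sum_range_succ'] at h
    try simp only [Nat.succ_sub_succ, pow_zero, mul_one, Nat.sub_zero] at h
    -- h : ∑ j in range (s+1), c (j+1) * a^(j+1) * b^(s-j) + c 0 * b^(s+1) = 0
    have hdvd : a ∣ c 0 * b ^ (s+1) := by
      refine ⟨-∑ j ∈ Finset.range (s+1), c (j+1) * a^j * b^(s-j), ?_⟩
      have h3 : c 0 * b^(s+1) = -∑ j ∈ Finset.range (s+1), c (j+1) * a^(j+1) * b^(s-j) := by
        linear_combination h
      rw [h3, mul_neg, Finset.mul_sum, neg_inj]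
      refine Finset.sum_congr rfl fun j _ => by ring
    obtain ⟨e, he⟩ := hrel _ _ hdvd
    set c' : ℕ → R := fun j => c (j+1) + (if j = 0 then b * e else 0) with hc'
    have hsum' : ∑ j ∈ Finset.range (s+1), c' j * a^j * b^(s-j) = 0 := by
      have key2 : a * ∑ j ∈ Finset.range (s+1), c' j * a^j * b^(s-j) = 0 := by
        rw [Finset.mul_sum]
        have e1 : ∀ j, a * (c' j * a^j * b^(s-j)) =
            c (j+1) * a^(j+1) * b^(s-j) + (if j = 0 then a*b*e*b^s else 0) := by
          intro j
          by_cases hj : j = 0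
          · subst hj; simp only [hc', eq_self_iff_true, if_true, Nat.sub_zero]; ring
          · simp only [hc', if_neg hj, add_zero]; ring
        rw [Finset.sum_congr rfl fun j _ => e1 j, Finset.sum_add_distrib,
          Finset.sum_ite_eq' (Finset.range (s+1)) 0 (fun _ => a*b*e*b^s)]
        simp only [Finset.mem_range, Nat.succ_pos, if_true]
        have h4 : c 0 * b^(s+1) = a * b * e * b^s := by rw [he]; ring
        linear_combination h - h4
      rcases mul_eq_zero.mp key2 with h' | h'
      · exact absurd h' ha
      · exact h'
    obtain ⟨D', hvan', hD'⟩ := IH c' hsum'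
    refine ⟨fun p => if p = 0 then e else D' (p-1), fun p hp => ?_, fun p hp => ?_⟩
    · have hp0 : p ≠ 0 := by omega
      simp only [if_neg hp0]
      exact hvan' _ (by omega)
    · match p with
      | 0 => simp [he]
      | q + 1 =>
        have hq : q ≤ s := by omega
        have h1 := hD' q hq
        have h2 : c' q = c (q+1) + (if q = 0 then b * e else 0) := rfl
        simp only [Nat.succ_ne_zero, if_false, Nat.add_sub_cancel]
        by_cases hq0 : q = 0
        · subst hq0
          rw [if_pos rfl] at h1 ⊢
          rw [if_pos rfl] at h2
          linear_combination h1 - h2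
        · rw [if_neg hq0] at h1 ⊢
          rw [if_neg hq0, add_zero] at h2
          linear_combination h1 - h2

variable (K : Type) [Field K] (m n : ℕ)

noncomputable def pA : MvPolynomial (Fin m ⊕ Fin n) K := ∏ i : Fin m, X (Sum.inl i)
noncomputable def pB : MvPolynomial (Fin m ⊕ Fin n) K := ∏ j : Fin n, X (Sum.inr j)

theorem pA_ne_zero : pA K m n ≠ 0 :=
  Finset.prod_ne_zero_iff.mpr fun i _ => X_ne_zero _

theorem pB_ne_zero : pB K m n ≠ 0 :=
  Finset.prod_ne_zero_iff.mpr fun i _ => X_ne_zero _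

theorem X_inl_not_dvd_pB (i : Fin m) : ¬ (X (Sum.inl i) ∣ pB K m n) := by
  rintro ⟨t, ht⟩
  set φ : MvPolynomial (Fin m ⊕ Fin n) K →ₐ[K] MvPolynomial (Fin m ⊕ Fin n) K :=
    aeval (Sum.elim (fun _ : Fin m => (0 : MvPolynomial (Fin m ⊕ Fin n) K))
      (fun j : Fin n => X (Sum.inr j))) with hφ
  have h1 : φ (pB K m n) = pB K m n := by
    simp [pB, hφ, map_prod]
  have h2 : φ (X (Sum.inl i) * t) = 0 := by
    rw [map_mul]
    simp [hφ]
  have h3 := congrArg φ ht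
  rw [h1, h2] at h3
  exact pB_ne_zero K m n h3

theorem prod_rel_prime (t : Finset (Fin m)) :
    ∀ (c : MvPolynomial (Fin m ⊕ Fin n) K) (k : ℕ),
      (∏ i ∈ t, X (Sum.inl i)) ∣ c * pB K m n ^ k → (∏ i ∈ t, X (Sum.inl i)) ∣ c := by
  classical
  induction t using Finset.induction_on with
  | empty => intro c k _; simpa using one_dvd c
  | @insert a t ha IH =>
    intro c k h
    rw [Finset.prod_insert ha] at h ⊢
    have hprime : Prime (X (Sum.inl a) : MvPolynomial (Fin m ⊕ Fin n) K) := prime_X _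
    have h1 : (X (Sum.inl a) : MvPolynomial (Fin m ⊕ Fin n) K) ∣ c * pB K m n ^ k :=
      (dvd_mul_right _ _).trans h
    rcases hprime.2.2 c _ h1 with h2 | h2
    · obtain ⟨c', rfl⟩ := h2
      have h3 : (∏ i ∈ t, (X (Sum.inl i) : MvPolynomial (Fin m ⊕ Fin n) K))
          ∣ c' * pB K m n ^ k := by
        rw [mul_assoc] at h
        exact (mul_dvd_mul_iff_left (X_ne_zero (Sum.inl a))).mp h
      exact mul_dvd_mul_left _ (IH c' k h3)
    · exact absurd (hprime.dvd_of_dvd_pow h2) (X_inl_not_dvd_pB K m n a)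

theorem pA_rel_prime (c : MvPolynomial (Fin m ⊕ Fin n) K) (k : ℕ)
    (h : pA K m n ∣ c * pB K m n ^ k) : pA K m n ∣ c :=
  prod_rel_prime K m n Finset.univ c k h

theorem coverIdeal_eq :
    coverIdeal K (completeBipartiteGraph (Fin m) (Fin n)) =
      Ideal.span {pA K m n, pB K m n} := by
  have hinjl : ∀ a ∈ (Finset.univ : Finset (Fin m)), ∀ b ∈ Finset.univ,
      (Sum.inl a : Fin m ⊕ Fin n) = Sum.inl b → a = b :=
    fun a _ b _ h => Sum.inl.inj h
  have hinjr : ∀ a ∈ (Finset.univ : Finset (Fin n)), ∀ b ∈ Finset.univ,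
      (Sum.inr a : Fin m ⊕ Fin n) = Sum.inr b → a = b :=
    fun a _ b _ h => Sum.inr.inj h
  apply le_antisymm
  · rw [coverIdeal, Ideal.span_le]
    rintro p ⟨w, hw, rfl⟩
    by_cases hall : ∀ i : Fin m, Sum.inl i ∈ w
    · have hsub : Finset.univ.image (Sum.inl : Fin m → Fin m ⊕ Fin n) ⊆ w := by
        intro x hx
        simp only [Finset.mem_image, Finset.mem_univ, true_and] at hx
        obtain ⟨i, rfl⟩ := hx
        exact hall i
      have hprod : (∏ x ∈ w, X x : MvPolynomial (Fin m ⊕ Fin n) K)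
          = pA K m n * ∏ x ∈ w \ Finset.univ.image Sum.inl, X x := by
        rw [pA, ← Finset.prod_image (f := fun x => (X x : MvPolynomial (Fin m ⊕ Fin n) K)) hinjl,
          ← Finset.prod_sdiff hsub]
        ring
      rw [hprod]
      exact Ideal.mul_mem_right _ _ (Ideal.subset_span (by simp))
    · push_neg at hall
      obtain ⟨i, hi⟩ := hall
      have hall2 : ∀ j : Fin n, Sum.inr j ∈ w := by
        intro j
        rcases hw (show (completeBipartiteGraph (Fin m) (Fin n)).Adj (Sum.inl i) (Sum.inr j)
          by simp) with h | h
        · exact absurd h hi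
        · exact h
      have hsub : Finset.univ.image (Sum.inr : Fin n → Fin m ⊕ Fin n) ⊆ w := by
        intro x hx
        simp only [Finset.mem_image, Finset.mem_univ, true_and] at hx
        obtain ⟨j, rfl⟩ := hx
        exact hall2 j
      have hprod : (∏ x ∈ w, X x : MvPolynomial (Fin m ⊕ Fin n) K)
          = pB K m n * ∏ x ∈ w \ Finset.univ.image Sum.inr, X x := by
        rw [pB, ← Finset.prod_image (f := fun x => (X x : MvPolynomial (Fin m ⊕ Fin n) K)) hinjr,
          ← Finset.prod_sdiff hsub]
        ring
      rw [hprod]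
      exact Ideal.mul_mem_right _ _ (Ideal.subset_span (by simp))
  · rw [Ideal.span_le]
    rintro p hp
    simp only [Set.mem_insert_iff, Set.mem_singleton_iff] at hp
    rcases hp with rfl | rfl
    · apply Ideal.subset_span
      refine ⟨Finset.univ.image Sum.inl, ?_, ?_⟩
      · rintro (i | j) (i' | j') hadj
        · simp at hadj
        · left; simp
        · right; simp
        · simp at hadj
      · rw [Finset.prod_image hinjl, pA]
    · apply Ideal.subset_span
      refine ⟨Finset.univ.image Sum.inr, ?_, ?_⟩
      · rintro (i | j) (i' | j') hadj
        · simp at hadj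
        · right; simp
        · left; simp
        · simp at hadj
      · rw [Finset.prod_image hinjr, pB]

theorem span_pow : ∀ s : ℕ, Ideal.span {pA K m n, pB K m n} ^ s =
    Ideal.span ((fun j : ℕ => pA K m n ^ j * pB K m n ^ (s - j)) '' Set.Iic s) := by
  intro s
  set A := pA K m n
  set B := pB K m n
  induction s with
  | zero =>
    rw [pow_zero, Ideal.one_eq_top, eq_comm, Ideal.eq_top_iff_one]
    exact Ideal.subset_span ⟨0, by simp, by simp⟩
  | succ s IH =>
    rw [pow_succ, IH, Ideal.span_mul_span]
    apply le_antisymm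
    · rw [Ideal.span_le]
      rintro x hx
      simp only [Set.mem_iUnion, Set.mem_singleton_iff, exists_prop, Set.mem_mul] at hx
      obtain ⟨u, ⟨j, hj, rfl⟩, v, hv, rfl⟩ := hx
      simp only [Set.mem_Iic] at hj
      simp only [Set.mem_insert_iff, Set.mem_singleton_iff] at hv
      apply Ideal.subset_span
      rcases hv with rfl | rfl
      · refine ⟨j + 1, by simp only [Set.mem_Iic]; omega, ?_⟩
        show A ^ (j+1) * B ^ (s+1-(j+1)) = A ^ j * B ^ (s-j) * A
        have h5 : s + 1 - (j + 1) = s - j := by omega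
        rw [h5, pow_succ]
        ring
      · refine ⟨j, by simp only [Set.mem_Iic]; omega, ?_⟩
        show A ^ j * B ^ (s+1-j) = A ^ j * B ^ (s-j) * B
        have h5 : s + 1 - j = (s - j) + 1 := by omega
        rw [h5, pow_succ]
        ring
    · rw [Ideal.span_le]
      rintro x ⟨j, hj, rfl⟩
      simp only [Set.mem_Iic] at hj
      apply Ideal.subset_span
      simp only [Set.mem_iUnion, Set.mem_singleton_iff, exists_prop, Set.mem_mul]
      match j with
      | 0 =>
        refine ⟨A ^ 0 * B ^ (s - 0), ⟨0, by simp, rfl⟩, B, by simp, ?_⟩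
        simp only [Nat.sub_zero, pow_zero, one_mul]
        rw [← pow_succ]
      | q + 1 =>
        refine ⟨A ^ q * B ^ (s - q), ⟨q, by simp only [Set.mem_Iic]; omega, rfl⟩, A, by simp, ?_⟩
        have h5 : s + 1 - (q + 1) = s - q := by omega
        rw [h5, pow_succ]
        ring






theorem pA_hom : (pA K m n).IsHomogeneous m := by
  have h := IsHomogeneous.prod Finset.univ
    (fun i : Fin m => (X (Sum.inl i) : MvPolynomial (Fin m ⊕ Fin n) K))
    (fun _ => 1) (fun i _ => isHomogeneous_X _ _)
  simpa [pA] using h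

theorem pB_hom : (pB K m n).IsHomogeneous n := by
  have h := IsHomogeneous.prod Finset.univ
    (fun j : Fin n => (X (Sum.inr j) : MvPolynomial (Fin m ⊕ Fin n) K))
    (fun _ => 1) (fun j _ => isHomogeneous_X _ _)
  simpa [pB] using h

theorem pA_cc (hm : 1 ≤ m) : constantCoeff (pA K m n) = 0 := by
  rw [pA, map_prod]
  exact Finset.prod_eq_zero (Finset.mem_univ (⟨0, hm⟩ : Fin m)) (by simp)

theorem pB_cc (hn : 1 ≤ n) : constantCoeff (pB K m n) = 0 := by
  rw [pB, map_prod]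
  exact Finset.prod_eq_zero (Finset.mem_univ (⟨0, hn⟩ : Fin n)) (by simp)

noncomputable def genF (s : ℕ) : Fin (s+1) → MvPolynomial (Fin m ⊕ Fin n) K :=
  fun j => pA K m n ^ (j:ℕ) * pB K m n ^ (s - (j:ℕ))

noncomputable def mat0 (s : ℕ) :
    Matrix (Fin (s+1)) (Fin s) (MvPolynomial (Fin m ⊕ Fin n) K) :=
  fun p q => if (p:ℕ) = (q:ℕ) then pA K m n
    else if (p:ℕ) = (q:ℕ)+1 then -pB K m n else 0

def Dex {M : Type} [Zero M] (s : ℕ) (d : Fin s → M) : ℕ → M :=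
  fun t => if h : t < s then d ⟨t, h⟩ else 0

theorem range_genF (s : ℕ) : Set.range (genF K m n s) =
    (fun j : ℕ => pA K m n ^ j * pB K m n ^ (s - j)) '' Set.Iic s := by
  ext x
  constructor
  · rintro ⟨j, rfl⟩
    exact ⟨(j:ℕ), by simp only [Set.mem_Iic]; omega, rfl⟩
  · rintro ⟨t, ht, rfl⟩
    simp only [Set.mem_Iic] at ht
    exact ⟨⟨t, by omega⟩, rfl⟩

theorem row_eq (s : ℕ) (d : Fin s → MvPolynomial (Fin m ⊕ Fin n) K) (p : Fin (s+1)) :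
    (mat0 K m n s).mulVec d p
      = pA K m n * Dex s d (p:ℕ)
        - (if (p:ℕ) = 0 then 0 else pB K m n * Dex s d ((p:ℕ)-1)) := by
  have h1 : (mat0 K m n s).mulVec d p = ∑ q : Fin s, mat0 K m n s p q * d q := rfl
  have h2 : ∀ q : Fin s, mat0 K m n s p q * d q
      = (fun t => (if (p:ℕ) = t then pA K m n * Dex s d t else 0)
          + (if (p:ℕ) = t + 1 then (-pB K m n) * Dex s d t else 0)) (q:ℕ) := by
    intro q
    have hd : d q = Dex s d (q:ℕ) := by simp [Dex, q.2]
    show (if (p:ℕ) = (q:ℕ) then pA K m n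
        else if (p:ℕ) = (q:ℕ)+1 then -pB K m n else 0) * d q
      = (if (p:ℕ) = (q:ℕ) then pA K m n * Dex s d (q:ℕ) else 0)
        + (if (p:ℕ) = (q:ℕ) + 1 then (-pB K m n) * Dex s d (q:ℕ) else 0)
    by_cases hq : (p:ℕ) = (q:ℕ)
    · rw [if_pos hq, if_pos hq, if_neg (by omega), add_zero, hd]
    · rw [if_neg hq, if_neg hq, zero_add]
      by_cases hq' : (p:ℕ) = (q:ℕ)+1
      · rw [if_pos hq', if_pos hq', hd]
      · rw [if_neg hq', if_neg hq', zero_mul]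
  rw [h1, Finset.sum_congr rfl (fun q _ => h2 q),
    Fin.sum_univ_eq_sum_range
      (fun t => (if (p:ℕ) = t then pA K m n * Dex s d t else 0)
          + (if (p:ℕ) = t + 1 then (-pB K m n) * Dex s d t else 0)) s,
    Finset.sum_add_distrib,
    Finset.sum_ite_eq (Finset.range s) (p:ℕ) (fun t => pA K m n * Dex s d t)]
  have h3 : (if (p:ℕ) ∈ Finset.range s then pA K m n * Dex s d (p:ℕ) else 0)
      = pA K m n * Dex s d (p:ℕ) := by
    by_cases h : (p:ℕ) ∈ Finset.range s
    · rw [if_pos h]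
    · rw [if_neg h]
      have : Dex s d (p:ℕ) = 0 := by
        rw [Dex]; rw [dif_neg (by simpa using h)]
      rw [this, mul_zero]
  have h4 : ∑ t ∈ Finset.range s, (if (p:ℕ) = t + 1 then (-pB K m n) * Dex s d t else 0)
      = -(if (p:ℕ) = 0 then 0 else pB K m n * Dex s d ((p:ℕ)-1)) := by
    rcases hr : (p:ℕ) with _ | r
    · rw [if_pos rfl, neg_zero]
      exact Finset.sum_eq_zero fun t _ => if_neg (by omega)
    · rw [if_neg (by omega)]
      have hcongr : ∀ t ∈ Finset.range s,
          (if r + 1 = t + 1 then (-pB K m n) * Dex s d t else 0)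
            = (if r = t then (-pB K m n) * Dex s d t else 0) := by
        intro t _
        by_cases h : r = t
        · rw [if_pos (by omega), if_pos h]
        · rw [if_neg (by omega), if_neg h]
      rw [Finset.sum_congr rfl hcongr,
        Finset.sum_ite_eq (Finset.range s) r (fun t => (-pB K m n) * Dex s d t)]
      have h5 : r + 1 - 1 = r := by omega
      rw [h5]
      by_cases h : r ∈ Finset.range s
      · rw [if_pos h]; ring
      · rw [if_neg h]
        have : Dex s d r = 0 := by rw [Dex]; rw [dif_neg (by simpa using h)]
        rw [this, mul_zero, neg_zero]
  rw [h3, h4]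
  ring

theorem col_eq (s : ℕ) (q : Fin s) :
    ∑ p : Fin (s+1), mat0 K m n s p q * genF K m n s p = 0 := by
  have h2 : ∀ p : Fin (s+1), mat0 K m n s p q * genF K m n s p
      = (fun t => (if t = (q:ℕ) then pA K m n * (pA K m n ^ t * pB K m n ^ (s-t)) else 0)
          + (if t = (q:ℕ)+1 then (-pB K m n) * (pA K m n ^ t * pB K m n ^ (s-t)) else 0))
          (p:ℕ) := by
    intro p
    show (if (p:ℕ) = (q:ℕ) then pA K m n
        else if (p:ℕ) = (q:ℕ)+1 then -pB K m n else 0)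
        * (pA K m n ^ (p:ℕ) * pB K m n ^ (s - (p:ℕ)))
      = (if (p:ℕ) = (q:ℕ) then pA K m n * (pA K m n ^ (p:ℕ) * pB K m n ^ (s-(p:ℕ))) else 0)
        + (if (p:ℕ) = (q:ℕ)+1 then (-pB K m n) * (pA K m n ^ (p:ℕ) * pB K m n ^ (s-(p:ℕ))) else 0)
    by_cases hq : (p:ℕ) = (q:ℕ)
    · rw [if_pos hq, if_pos hq, if_neg (by omega), add_zero]
    · rw [if_neg hq, if_neg hq, zero_add]
      by_cases hq' : (p:ℕ) = (q:ℕ)+1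
      · rw [if_pos hq', if_pos hq']
      · rw [if_neg hq', if_neg hq', zero_mul]
  rw [Finset.sum_congr rfl (fun p _ => h2 p),
    Fin.sum_univ_eq_sum_range
      (fun t => (if t = (q:ℕ) then pA K m n * (pA K m n ^ t * pB K m n ^ (s-t)) else 0)
          + (if t = (q:ℕ)+1 then (-pB K m n) * (pA K m n ^ t * pB K m n ^ (s-t)) else 0))
      (s+1),
    Finset.sum_add_distrib,
    Finset.sum_ite_eq' (Finset.range (s+1)) (q:ℕ)
      (fun t => pA K m n * (pA K m n ^ t * pB K m n ^ (s-t))),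
    Finset.sum_ite_eq' (Finset.range (s+1)) ((q:ℕ)+1)
      (fun t => (-pB K m n) * (pA K m n ^ t * pB K m n ^ (s-t)))]
  rw [if_pos (by simp only [Finset.mem_range]; omega),
    if_pos (by simp only [Finset.mem_range]; omega)]
  have hq : (q:ℕ) < s := q.2
  have h5 : s - (q:ℕ) = (s - ((q:ℕ)+1)) + 1 := by omega
  rw [h5, pow_succ]
  ring


theorem hDex_eq (s : ℕ) (D : ℕ → MvPolynomial (Fin m ⊕ Fin n) K)
    (hvan : ∀ p, s ≤ p → D p = 0) (t : ℕ) :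
    Dex s (fun q : Fin s => D (q:ℕ)) t = D t := by
  by_cases h : t < s
  · simp [Dex, h]
  · simp [Dex, h, hvan t (by omega)]

end CIAux

open CIAux in
noncomputable def bigRes (K : Type) [Field K] (m n : ℕ) (hm : 1 ≤ m) (hmn : m ≤ n)
    (s : ℕ) (hs : 1 ≤ s) :
    MinimalGradedFreeResolution
      ((coverIdeal K (completeBipartiteGraph (Fin m) (Fin n))) ^ s) where
  len := 2
  rank := fun i => match i with | 1 => s + 1 | 2 => s | _ => 0
  deg := fun i j => (j:ℕ) * m + (s - (j:ℕ)) * n + (if i = 2 then m else 0)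
  gen := genF K m n s
  mat := fun i => match i with
    | 0 => mat0 K m n s
    | _+1 => 0
  rank_pos := by
    intro i h1 h2
    interval_cases i
    · exact Nat.succ_pos s
    · exact hs
  rank_zero := by
    intro i hi
    obtain ⟨k, rfl⟩ : ∃ k, i = k + 3 := ⟨i - 3, by omega⟩
    rfl
  span_gen := by
    rw [range_genF, ← span_pow, ← coverIdeal_eq]
  gen_hom := by
    intro j
    show (pA K m n ^ (j:ℕ) * pB K m n ^ (s - (j:ℕ))).IsHomogeneous
      ((j:ℕ) * m + (s - (j:ℕ)) * n)
    have h := ((pA_hom K m n).pow (j:ℕ)).mul ((pB_hom K m n).pow (s - (j:ℕ)))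
    have e : (j:ℕ) * m + (s - (j:ℕ)) * n = m * (j:ℕ) + n * (s - (j:ℕ)) := by ring
    rw [e]
    exact h
  mat_hom := by
    intro i p q
    rcases i with _ | i
    · by_cases h1 : (p:ℕ) = (q:ℕ)
      · right
        constructor
        · show (p:ℕ) * m + (s - (p:ℕ)) * n ≤ (q:ℕ) * m + (s - (q:ℕ)) * n + m
          rw [h1]
          exact Nat.le_add_right _ _
        · show (if (p:ℕ) = (q:ℕ) then pA K m n
            else if (p:ℕ) = (q:ℕ)+1 then -pB K m n else 0).IsHomogeneous
            (((q:ℕ) * m + (s - (q:ℕ)) * n + m) - ((p:ℕ) * m + (s - (p:ℕ)) * n))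
          rw [if_pos h1, h1, Nat.add_sub_cancel_left]
          exact pA_hom K m n
      · by_cases h2 : (p:ℕ) = (q:ℕ) + 1
        · right
          have hq : (q:ℕ) < s := q.2
          have e2 : s - (q:ℕ) = (s - ((q:ℕ)+1)) + 1 := by omega
          constructor
          · show (p:ℕ) * m + (s - (p:ℕ)) * n ≤ (q:ℕ) * m + (s - (q:ℕ)) * n + m
            rw [h2, e2, add_one_mul, add_one_mul]
            generalize (q:ℕ) * m = P
            generalize (s - ((q:ℕ)+1)) * n = Q
            omega
          · show (if (p:ℕ) = (q:ℕ) then pA K m n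
              else if (p:ℕ) = (q:ℕ)+1 then -pB K m n else 0).IsHomogeneous
              (((q:ℕ) * m + (s - (q:ℕ)) * n + m) - ((p:ℕ) * m + (s - (p:ℕ)) * n))
            rw [if_neg h1, if_pos h2]
            have e : ((q:ℕ) * m + (s - (q:ℕ)) * n + m)
                - (((q:ℕ)+1) * m + (s - ((q:ℕ)+1)) * n) = n := by
              rw [e2, add_one_mul, add_one_mul]
              generalize (q:ℕ) * m = P
              generalize (s - ((q:ℕ)+1)) * n = Q
              omega
            rw [h2, e]
            exact (pB_hom K m n).neg
        · left
          show (if (p:ℕ) = (q:ℕ) then pA K m n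
              else if (p:ℕ) = (q:ℕ)+1 then -pB K m n else 0) = 0
          rw [if_neg h1, if_neg h2]
    · exact q.elim0
  exact_one := by
    intro c
    constructor
    · intro hc
      unfold lcomb at hc
      rw [Fintype.linearCombination_apply] at hc
      set C : ℕ → MvPolynomial (Fin m ⊕ Fin n) K :=
        fun t => if h : t < s + 1 then c ⟨t, h⟩ else 0 with hC
      have hCc : ∀ j : Fin (s+1), C (j:ℕ) = c j := fun j => by
        show (if h : (j:ℕ) < s + 1 then c ⟨j, h⟩ else 0) = c j
        rw [dif_pos j.2]
        rfl
      have hsum : ∑ t ∈ Finset.range (s+1), C t * pA K m n ^ t * pB K m n ^ (s-t) = 0 := by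
        rw [← Fin.sum_univ_eq_sum_range
          (fun t => C t * pA K m n ^ t * pB K m n ^ (s-t)) (s+1), ← hc]
        refine Finset.sum_congr rfl fun j _ => ?_
        rw [hCc j, smul_eq_mul]
        show c j * pA K m n ^ (j:ℕ) * pB K m n ^ (s-(j:ℕ))
          = c j * (pA K m n ^ (j:ℕ) * pB K m n ^ (s-(j:ℕ)))
        ring
      obtain ⟨D, hvan, hD⟩ := key (pA K m n) (pB K m n) (pA_ne_zero K m n)
        (fun c k h => pA_rel_prime K m n c k h) s C hsum
      refine ⟨fun q : Fin s => D (q:ℕ), ?_⟩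
      funext p
      rw [Matrix.mulVecLin_apply]
      show (mat0 K m n s).mulVec (fun q : Fin s => D (q:ℕ)) p = c p
      rw [row_eq]
      simp only [hDex_eq K m n s D hvan]
      rw [← hCc p]
      have hp : (p:ℕ) < s + 1 := p.2
      exact (hD (p:ℕ) (by omega)).symm
    · rintro ⟨d, rfl⟩
      unfold lcomb
      rw [Fintype.linearCombination_apply]
      have hterm : ∀ p : Fin (s+1),
          ((mat0 K m n s).mulVecLin d) p • genF K m n s p
            = ∑ q : Fin s, d q * (mat0 K m n s p q * genF K m n s p) := by
        intro p
        rw [Matrix.mulVecLin_apply]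
        show (∑ q : Fin s, mat0 K m n s p q * d q) • genF K m n s p = _
        rw [Finset.sum_smul]
        refine Finset.sum_congr rfl fun q _ => ?_
        rw [smul_eq_mul]; ring
      rw [show ⇑((mat0 K m n s).mulVecLin) = fun d => (mat0 K m n s).mulVecLin d from rfl]
      show ∑ p : Fin (s+1), (mat0 K m n s).mulVecLin d p • genF K m n s p = 0
      rw [Finset.sum_congr rfl (fun p _ => hterm p), Finset.sum_comm]
      refine Finset.sum_eq_zero fun q _ => ?_
      rw [← Finset.mul_sum, col_eq K m n s q, mul_zero]
  exact_succ := by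
    intro i
    rcases i with _ | i
    · intro d
      constructor
      · intro h
        have hrow : ∀ p : Fin (s+1),
            pA K m n * Dex s d (p:ℕ)
              - (if (p:ℕ) = 0 then 0 else pB K m n * Dex s d ((p:ℕ)-1)) = 0 := by
          intro p
          rw [← row_eq]
          have := congrFun h p
          rw [Matrix.mulVecLin_apply] at this
          exact this
        have hz : ∀ t : ℕ, Dex s d t = 0 := by
          intro t
          induction t with
          | zero =>
            have h0 := hrow ⟨0, by omega⟩
            simp only [Fin.val_mk, eq_self_iff_true, if_true, sub_zero] at h0
            rcases mul_eq_zero.mp h0 with h' | h'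
            · exact absurd h' (pA_ne_zero K m n)
            · exact h'
          | succ t IH =>
            by_cases ht : t + 1 < s
            · have h0 := hrow ⟨t+1, by omega⟩
              simp only [Fin.val_mk, if_neg (Nat.succ_ne_zero t), Nat.add_sub_cancel,
                IH, mul_zero, sub_zero] at h0
              rcases mul_eq_zero.mp h0 with h' | h'
              · exact absurd h' (pA_ne_zero K m n)
              · exact h'
            · rw [Dex, dif_neg ht]
        have hd0 : d = 0 := by
          funext q
          have := hz (q:ℕ)
          rw [Dex, dif_pos (show (q:ℕ) < s from q.2)] at this
          simpa using this
        rw [hd0]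
        exact ⟨0, map_zero _⟩
      · rintro ⟨y, rfl⟩
        have hy : y = 0 := funext fun q => q.elim0
        rw [hy, map_zero, map_zero]
    · intro y
      constructor
      · intro _
        exact ⟨0, funext fun q => q.elim0⟩
      · intro _
        have hy : y = 0 := funext fun q => q.elim0
        rw [hy, map_zero]
  minimal_gen := by
    intro j
    show constantCoeff (pA K m n ^ (j:ℕ) * pB K m n ^ (s - (j:ℕ))) = 0
    rw [map_mul, map_pow, map_pow, pA_cc K m n hm, pB_cc K m n (hm.trans hmn)]
    rcases Nat.eq_zero_or_pos (j:ℕ) with h | h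
    · rw [h, pow_zero, one_mul, zero_pow (by omega)]
    · rw [zero_pow (by omega), zero_mul]
  minimal_mat := by
    intro i p q
    rcases i with _ | i
    · show constantCoeff (if (p:ℕ) = (q:ℕ) then pA K m n
        else if (p:ℕ) = (q:ℕ)+1 then -pB K m n else 0) = 0
      split_ifs with h1 h2
      · exact pA_cc K m n hm
      · rw [map_neg, pB_cc K m n (hm.trans hmn), neg_zero]
      · exact map_zero _
    · exact q.elim0


/-- For the complete bipartite graph `K_{m,n}` with `m ≤ n`,
`reg(J^s) = s * n + m - 1` for all `s ≥ 1`. -/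
theorem regularity_powers_coverIdeal_completeBipartite
    (K : Type) [Field K] (m n : ℕ) (hm : 1 ≤ m) (hmn : m ≤ n)
    (s : ℕ) (hs : 1 ≤ s) :
    ∃ res : MinimalGradedFreeResolution
        ((coverIdeal K (completeBipartiteGraph (Fin m) (Fin n))) ^ s),
      res.regIdeal = s * n + m - 1 := by

  refine ⟨bigRes K m n hm hmn s hs, ?_⟩
  unfold MinimalGradedFreeResolution.regIdeal
  rw [show (bigRes K m n hm hmn s hs).len = 2 from rfl]
  rw [show Finset.range 2 = {0, 1} from rfl, Finset.sup_insert, Finset.sup_singleton]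
  show ((Finset.univ.sup fun j : Fin (s+1) => (j:ℕ) * m + (s - (j:ℕ)) * n) - 0)
      ⊔ ((Finset.univ.sup fun j : Fin s => (j:ℕ) * m + (s - (j:ℕ)) * n + m) - 1)
    = s * n + m - 1
  have hU0 : (Finset.univ.sup fun j : Fin (s+1) => (j:ℕ) * m + (s - (j:ℕ)) * n) = s * n := by
    apply le_antisymm
    · refine Finset.sup_le fun j _ => ?_
      have hj : (j:ℕ) ≤ s := by omega
      calc (j:ℕ) * m + (s - (j:ℕ)) * n ≤ (j:ℕ) * n + (s - (j:ℕ)) * n := by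
            have := Nat.mul_le_mul_left (j:ℕ) hmn
            omega
        _ = s * n := by rw [← Nat.add_mul]; congr 1; omega
    · have h := Finset.le_sup (f := fun j : Fin (s+1) => (j:ℕ) * m + (s - (j:ℕ)) * n)
        (Finset.mem_univ (⟨0, by omega⟩ : Fin (s+1)))
      simpa using h
  have hU1 : (Finset.univ.sup fun j : Fin s => (j:ℕ) * m + (s - (j:ℕ)) * n + m)
      = s * n + m := by
    apply le_antisymm
    · refine Finset.sup_le fun j _ => ?_
      have hj : (j:ℕ) ≤ s := by omega
      have hcalc : (j:ℕ) * m + (s - (j:ℕ)) * n ≤ s * n := by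
        calc (j:ℕ) * m + (s - (j:ℕ)) * n ≤ (j:ℕ) * n + (s - (j:ℕ)) * n := by
              have := Nat.mul_le_mul_left (j:ℕ) hmn
              omega
          _ = s * n := by rw [← Nat.add_mul]; congr 1; omega
      omega
    · have h := Finset.le_sup (f := fun j : Fin s => (j:ℕ) * m + (s - (j:ℕ)) * n + m)
        (Finset.mem_univ (⟨0, hs⟩ : Fin s))
      simpa using h
  rw [hU0, hU1, Nat.sub_zero]
  have hle : s * n ≤ s * n + m - 1 := by omega
  rw [sup_eq_right.mpr hle]
end

section
/- Let G be the bipartite graph with V(G) = {x_1,...,x_n, y_1,...,y_n} and E(G) = {{x_1,y_j} : 1 ≤ j ≤ n} ∪ {{x_i,y_i} : 2 ≤ i ≤ n}, and let J_G ⊂ R = K[x_1,...,x_n,y_1,...,y_n] be its cover ideal. Then the minimal number of generators μ(J_G) = 2^{n−1} + 1. -/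
open MvPolynomial

open MvPolynomial

section EW
variable {α : Type} [DecidableEq α]

/-- exponent vector of a squarefree monomial -/
noncomputable def ew (w : Finset α) : α →₀ ℕ := ∑ v ∈ w, Finsupp.single v 1

lemma ew_apply (w : Finset α) (u : α) : ew w u = if u ∈ w then 1 else 0 := by
  classical
  simp [ew, Finsupp.finset_sum_apply, Finsupp.single_apply, Finset.sum_ite_eq]

lemma ew_injective : Function.Injective (ew : Finset α → (α →₀ ℕ)) := by
  intro w w' h
  ext u
  have := DFunLike.congr_fun h u
  rw [ew_apply, ew_apply] at this
  by_cases hu : u ∈ w <;> by_cases hu' : u ∈ w' <;> simp [hu, hu'] at this ⊢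

lemma degree_add' (a b : α →₀ ℕ) : (a + b).degree = a.degree + b.degree := by
  simp only [Finsupp.degree_eq_weight_one]
  exact map_add _ _ _

lemma degree_ew (w : Finset α) : (ew w).degree = w.card := by
  classical
  simp only [ew, Finsupp.degree_eq_weight_one, map_sum]
  rw [Finset.card_eq_sum_ones]
  refine Finset.sum_congr rfl fun v _ => ?_
  simp [Finsupp.weight_apply, Finsupp.sum_single_index]

lemma prod_X_ew (K : Type) [CommSemiring K] (w : Finset α) :
    (∏ v ∈ w, (X v : MvPolynomial α K)) = monomial (ew w) 1 := by
  classical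
  induction w using Finset.induction with
  | empty => simp [ew]
  | insert a s h ih =>
    rw [Finset.prod_insert h, ih, X, monomial_mul, one_mul]
    congr 1
    simp [ew, Finset.sum_insert h]

end EW


section Graph
variable {n : ℕ} [NeZero n]

lemma isVC_iff (w : Finset (Fin n ⊕ Fin n)) :
    IsVertexCover (bipartiteFan n) w ↔
      ∀ i : Fin n, (Sum.inl 0 ∈ w ∨ Sum.inr i ∈ w) ∧ (Sum.inl i ∈ w ∨ Sum.inr i ∈ w) := by
  constructor
  · intro h i
    constructor
    · refine h (a := Sum.inl 0) (b := Sum.inr i) ?_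
      rw [bipartiteFan, SimpleGraph.fromRel_adj]
      exact ⟨by simp, Or.inl ⟨0, i, rfl, rfl, Or.inl (by simp)⟩⟩
    · refine h (a := Sum.inl i) (b := Sum.inr i) ?_
      rw [bipartiteFan, SimpleGraph.fromRel_adj]
      exact ⟨by simp, Or.inl ⟨i, i, rfl, rfl, Or.inr rfl⟩⟩
  · intro h a b hab
    rw [bipartiteFan, SimpleGraph.fromRel_adj] at hab
    obtain ⟨-, hr | hr⟩ := hab
    · obtain ⟨i, j, rfl, rfl, hij | hij⟩ := hr
      · have : i = 0 := by ext; simpa using hij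
        subst this
        exact (h j).1
      · subst hij
        exact (h i).2
    · obtain ⟨i, j, rfl, rfl, hij | hij⟩ := hr
      · have : i = 0 := by ext; simpa using hij
        subst this
        exact ((h j).1).symm
      · subst hij
        exact ((h i).2).symm

lemma card_of_cover {w : Finset (Fin n ⊕ Fin n)}
    (hw : IsVertexCover (bipartiteFan n) w) : n ≤ w.card := by
  rw [isVC_iff] at hw
  classical
  have key : ∀ i : Fin n, (if Sum.inl i ∈ w then (Sum.inl i : Fin n ⊕ Fin n) else Sum.inr i) ∈ w := by
    intro i
    rcases (hw i).2 with h | h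
    · simpa [h]
    · by_cases h' : Sum.inl i ∈ w <;> simp [h', h]
  calc n = (Finset.univ : Finset (Fin n)).card := by simp
    _ ≤ w.card := by
        refine Finset.card_le_card_of_injOn _ (fun i _ => key i) ?_
        intro i _ j _ hij
        by_cases hi : Sum.inl i ∈ w <;> by_cases hj : Sum.inl j ∈ w <;>
          simp [hi, hj] at hij <;> exact hij

end Graph

section Deg
variable {n : ℕ} [NeZero n] {K : Type} [Field K]

lemma deg_of_mem_coverIdeal {f : MvPolynomial (Fin n ⊕ Fin n) K}
    (hf : f ∈ coverIdeal K (bipartiteFan n)) :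
    ∀ m ∈ f.support, n ≤ m.degree := by
  classical
  let J : Ideal (MvPolynomial (Fin n ⊕ Fin n) K) :=
  { carrier := {f | ∀ m ∈ f.support, n ≤ m.degree}
    zero_mem' := by simp
    add_mem' := by
      intro p q hp hq m hm
      rcases Finset.mem_union.1 (MvPolynomial.support_add hm) with h | h
      · exact hp m h
      · exact hq m h
    smul_mem' := by
      intro c p hp m hm
      rw [smul_eq_mul] at hm
      obtain ⟨a, ha, b, hb, rfl⟩ := Finset.mem_add.1 (MvPolynomial.support_mul _ _ hm)
      rw [degree_add']
      exact le_add_self.trans (Nat.add_le_add_left (hp b hb) _) }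
  have hJ : coverIdeal K (bipartiteFan n) ≤ J := by
    rw [coverIdeal, Ideal.span_le]
    rintro p ⟨w, hw, rfl⟩
    intro m hm
    rw [prod_X_ew, MvPolynomial.support_monomial] at hm
    simp only [one_ne_zero, if_false, Finset.mem_singleton] at hm
    subst hm
    rw [degree_ew]
    exact card_of_cover hw
  exact hJ hf

end Deg

section Covers
variable {n : ℕ} [NeZero n]

/-- choice of endpoint of the edge `{x_i, y_i}`, forced to `x_0` for `i = 0`. -/
def pick (c : Fin n → Bool) (i : Fin n) : Fin n ⊕ Fin n :=
  if i = 0 then Sum.inl 0 else if c i then Sum.inl i else Sum.inr i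

lemma pick_or (c : Fin n → Bool) (i : Fin n) :
    pick c i = Sum.inl i ∨ pick c i = Sum.inr i := by
  unfold pick
  split_ifs with h h'
  · subst h; exact Or.inl rfl
  · exact Or.inl rfl
  · exact Or.inr rfl

lemma pick_injective (c : Fin n → Bool) : Function.Injective (pick c) := by
  intro i j h
  rcases pick_or c i with hi | hi <;> rcases pick_or c j with hj | hj <;>
    rw [hi, hj] at h <;> simp_all

/-- the minimal vertex cover determined by the choice `c`. -/
def cov (c : Fin n → Bool) : Finset (Fin n ⊕ Fin n) := Finset.image (pick c) Finset.univ

lemma card_cov (c : Fin n → Bool) : (cov c).card = n := by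
  rw [cov, Finset.card_image_of_injective _ (pick_injective c)]; simp

lemma inl_zero_mem_cov (c : Fin n → Bool) : Sum.inl 0 ∈ cov c :=
  Finset.mem_image.2 ⟨0, Finset.mem_univ _, by simp [pick]⟩

lemma cov_isVC (c : Fin n → Bool) : IsVertexCover (bipartiteFan n) (cov c) := by
  rw [isVC_iff]
  intro i
  refine ⟨Or.inl (inl_zero_mem_cov c), ?_⟩
  have hmem : pick c i ∈ cov c := Finset.mem_image.2 ⟨i, Finset.mem_univ _, rfl⟩
  rcases pick_or c i with h | h
  · exact Or.inl (h ▸ hmem)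
  · exact Or.inr (h ▸ hmem)

lemma inl_mem_cov_iff {c : Fin n → Bool} {i : Fin n} (hi : i ≠ 0) :
    Sum.inl i ∈ cov c ↔ c i = true := by
  constructor
  · intro h
    obtain ⟨j, -, hj⟩ := Finset.mem_image.1 h
    unfold pick at hj
    split_ifs at hj with h1 h2
    · simp only [Sum.inl.injEq] at hj; exact absurd hj.symm hi
    · simp only [Sum.inl.injEq] at hj; subst hj; exact h2
  · intro h
    refine Finset.mem_image.2 ⟨i, Finset.mem_univ _, ?_⟩
    simp [pick, hi, h]

/-- the cover of all `y`-vertices. -/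
def Ycov (n : ℕ) : Finset (Fin n ⊕ Fin n) := Finset.image Sum.inr Finset.univ

lemma card_Ycov : (Ycov n).card = n := by
  rw [Ycov, Finset.card_image_of_injective _ Sum.inr_injective]; simp

lemma Ycov_isVC : IsVertexCover (bipartiteFan n) (Ycov n) := by
  rw [isVC_iff]
  intro i
  have : Sum.inr i ∈ Ycov n := Finset.mem_image.2 ⟨i, Finset.mem_univ _, rfl⟩
  exact ⟨Or.inr this, Or.inr this⟩

/-- the set of minimal vertex covers. -/
noncomputable def Cset (n : ℕ) [NeZero n] : Finset (Finset (Fin n ⊕ Fin n)) :=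
  insert (Ycov n) ((Finset.univ.filter (fun c : Fin n → Bool => c 0 = true)).image cov)

lemma mem_Cset_cover {w : Finset (Fin n ⊕ Fin n)} (hw : w ∈ Cset n) :
    IsVertexCover (bipartiteFan n) w ∧ w.card = n := by
  rcases Finset.mem_insert.1 hw with rfl | hw
  · exact ⟨Ycov_isVC, card_Ycov⟩
  · obtain ⟨c, -, rfl⟩ := Finset.mem_image.1 hw
    exact ⟨cov_isVC c, card_cov c⟩

lemma card_Cset : (Cset n).card = 2 ^ (n - 1) + 1 := by
  classical
  rw [Cset, Finset.card_insert_of_notMem, Finset.card_image_of_injOn]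
  · congr 1
    have : (Finset.univ.filter (fun c : Fin n → Bool => c 0 = true)).card =
        (Finset.univ : Finset ({i : Fin n // i ≠ 0} → Bool)).card := by
      refine Finset.card_bij' (fun c _ => fun j => c j.1)
        (fun d _ => fun i => if h : i = 0 then true else d ⟨i, h⟩) ?_ ?_ ?_ ?_
      · intro c _; exact Finset.mem_univ _
      · intro d _; simp [Finset.mem_filter]
      · intro c hc
        funext i
        by_cases h : i = 0
        · subst h; simp only [dif_pos]
          exact ((Finset.mem_filter.1 hc).2).symm
        · simp [h]
      · intro d _
        funext j
        simp [j.2]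
    rw [this, Finset.card_univ, Fintype.card_fun]
    congr 1
    · rw [Fintype.card_subtype_compl, Fintype.card_fin, Fintype.card_subtype_eq]
  · intro c hc c' hc' h
    funext i
    by_cases hi : i = 0
    · subst hi
      rw [(Finset.mem_filter.1 (Finset.mem_coe.1 hc)).2,
        (Finset.mem_filter.1 (Finset.mem_coe.1 hc')).2]
    · have := inl_mem_cov_iff (c := c) hi
      rw [h, inl_mem_cov_iff hi] at this
      cases hci : c i <;> cases hci' : c' i <;> simp_all
  · intro h
    obtain ⟨c, -, hc⟩ := Finset.mem_image.1 h
    have := inl_zero_mem_cov c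
    rw [hc] at this
    obtain ⟨j, -, hj⟩ := Finset.mem_image.1 this
    exact absurd hj (by simp)

end Covers

section Span
variable {n : ℕ} [NeZero n] (K : Type) [Field K]

open Classical in
/-- the minimal generating set of the cover ideal. -/
noncomputable def GS (n : ℕ) [NeZero n] (K : Type) [Field K] :
    Finset (MvPolynomial (Fin n ⊕ Fin n) K) :=
  (Cset n).image (fun w => ∏ v ∈ w, X v)

lemma card_GS : (GS n K).card = 2 ^ (n - 1) + 1 := by
  classical
  rw [GS, Finset.card_image_of_injective, card_Cset]
  intro w w' h
  simp only at h
  rw [prod_X_ew, prod_X_ew] at h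
  exact ew_injective (MvPolynomial.monomial_left_injective one_ne_zero h)

lemma span_GS : Ideal.span ((GS n K : Set (MvPolynomial (Fin n ⊕ Fin n) K))) =
    coverIdeal K (bipartiteFan n) := by
  classical
  apply le_antisymm
  · rw [Ideal.span_le]
    intro p hp
    obtain ⟨w, hw, rfl⟩ := Finset.mem_image.1 (Finset.mem_coe.1 hp)
    exact Ideal.subset_span ⟨w, (mem_Cset_cover hw).1, rfl⟩
  · rw [coverIdeal, Ideal.span_le]
    rintro p ⟨w, hw, rfl⟩
    rw [isVC_iff] at hw
    simp only [SetLike.mem_coe]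
    by_cases h0 : Sum.inl 0 ∈ w
    · set c : Fin n → Bool := fun i => decide (Sum.inl i ∈ w) with hc
      have hsub : cov c ⊆ w := by
        intro v hv
        obtain ⟨i, -, rfl⟩ := Finset.mem_image.1 hv
        unfold pick
        split_ifs with h1 h2
        · exact h0
        · exact of_decide_eq_true h2
        · rcases (hw i).2 with h | h
          · exact absurd (decide_eq_true h) h2
          · exact h
      have hmem : (∏ v ∈ cov c, X v : MvPolynomial (Fin n ⊕ Fin n) K) ∈
          Ideal.span ((GS n K : Set (MvPolynomial (Fin n ⊕ Fin n) K))) := by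
        refine Ideal.subset_span (Finset.mem_coe.2 (Finset.mem_image.2 ⟨cov c, ?_, rfl⟩))
        refine Finset.mem_insert_of_mem (Finset.mem_image.2 ⟨c, ?_, rfl⟩)
        simp [hc, h0]
      rw [← Finset.prod_sdiff hsub]
      exact Ideal.mul_mem_left _ _ hmem
    · have hsub : Ycov n ⊆ w := by
        intro v hv
        obtain ⟨j, -, rfl⟩ := Finset.mem_image.1 hv
        rcases (hw j).1 with h | h
        · exact absurd h h0
        · exact h
      have hmem : (∏ v ∈ Ycov n, X v : MvPolynomial (Fin n ⊕ Fin n) K) ∈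
          Ideal.span ((GS n K : Set (MvPolynomial (Fin n ⊕ Fin n) K))) :=
        Ideal.subset_span (Finset.mem_coe.2 (Finset.mem_image.2
          ⟨Ycov n, Finset.mem_insert_self _ _, rfl⟩))
      rw [← Finset.prod_sdiff hsub]
      exact Ideal.mul_mem_left _ _ hmem

end Span

section Lower
variable {n : ℕ} [NeZero n] {K : Type} [Field K]

lemma lower_bound {t : Finset (MvPolynomial (Fin n ⊕ Fin n) K)}
    (ht : Ideal.span (t : Set (MvPolynomial (Fin n ⊕ Fin n) K)) = coverIdeal K (bipartiteFan n)) :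
    2 ^ (n - 1) + 1 ≤ t.card := by
  classical
  set Gs : Finset ((Fin n ⊕ Fin n) →₀ ℕ) := (Cset n).image ew with hGs
  have hGs_card : Gs.card = 2 ^ (n - 1) + 1 := by
    rw [hGs, Finset.card_image_of_injective _ ew_injective, card_Cset]
  set Φ : MvPolynomial (Fin n ⊕ Fin n) K →ₗ[K] ({m // m ∈ Gs} → K) :=
    { toFun := fun f g => MvPolynomial.coeff g.1 f
      map_add' := fun p q => by funext g; simp
      map_smul' := fun c p => by funext g; simp [MvPolynomial.coeff_smul] } with hΦ
  have hdeg : ∀ g ∈ Gs, Finsupp.degree g = n := by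
    intro g hg
    obtain ⟨w, hw, rfl⟩ := Finset.mem_image.1 hg
    rw [degree_ew, (mem_Cset_cover hw).2]
  have hsingle : ∀ g : {m // m ∈ Gs}, Pi.single g (1 : K) ∈ Submodule.span K (⇑Φ '' ↑t) := by
    intro g
    obtain ⟨w, hw, hgw⟩ := Finset.mem_image.1 g.2
    have hmono : (monomial g.1 1 : MvPolynomial (Fin n ⊕ Fin n) K) ∈ Ideal.span (t : Set _) := by
      rw [ht, ← hgw, ← prod_X_ew]
      exact Ideal.subset_span ⟨w, (mem_Cset_cover hw).1, rfl⟩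
    obtain ⟨f, -, hf⟩ := Submodule.mem_span_finset.1 hmono
    have key : ∀ q ∈ t, ∀ g' : {m // m ∈ Gs},
        MvPolynomial.coeff g'.1 (f q * q) =
          MvPolynomial.coeff 0 (f q) * MvPolynomial.coeff g'.1 q := by
      intro q hq g'
      rw [MvPolynomial.coeff_mul]
      refine Finset.sum_eq_single_of_mem (0, g'.1) ?_ ?_
      · rw [Finset.HasAntidiagonal.mem_antidiagonal]; exact zero_add _
      · rintro ⟨a, b⟩ hab hne
        rw [Finset.HasAntidiagonal.mem_antidiagonal] at hab
        dsimp only at hab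
        by_contra hcontra
        dsimp only at hcontra
        have hb : MvPolynomial.coeff b q ≠ 0 := right_ne_zero_of_mul hcontra
        have hbq : b ∈ q.support := MvPolynomial.mem_support_iff.2 hb
        have hq' : q ∈ coverIdeal K (bipartiteFan n) := ht ▸ Ideal.subset_span hq
        have hnb : n ≤ Finsupp.degree b := deg_of_mem_coverIdeal hq' b hbq
        have hdg' : Finsupp.degree (g'.1) = n := hdeg g'.1 g'.2
        have ha0 : a = 0 := by
          have hsum : Finsupp.degree a + Finsupp.degree b = n := by
            rw [← degree_add', hab, hdg']
          exact (Finsupp.degree_eq_zero_iff a).1 (by omega)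
        rw [ha0, zero_add] at hab
        exact hne (by simp [ha0, hab])
    have key2 : Pi.single g (1 : K) = ∑ q ∈ t, MvPolynomial.coeff 0 (f q) • Φ q := by
      funext g'
      have h1 : MvPolynomial.coeff g'.1 (monomial g.1 (1 : K)) = if g' = g then 1 else 0 := by
        rw [MvPolynomial.coeff_monomial]
        by_cases h : g' = g
        · subst h; simp
        · rw [if_neg (fun he => h (Subtype.ext he.symm)), if_neg h]
      calc (Pi.single g (1 : K) : {m // m ∈ Gs} → K) g' = if g' = g then 1 else 0 := by
            simp [Pi.single_apply]
        _ = MvPolynomial.coeff g'.1 (monomial g.1 1) := h1.symm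
        _ = MvPolynomial.coeff g'.1 (∑ q ∈ t, f q • q) := by rw [hf]
        _ = ∑ q ∈ t, MvPolynomial.coeff 0 (f q) * MvPolynomial.coeff g'.1 q := by
            rw [MvPolynomial.coeff_sum]
            exact Finset.sum_congr rfl fun q hq => by rw [smul_eq_mul, key q hq g']
        _ = (∑ q ∈ t, MvPolynomial.coeff 0 (f q) • Φ q) g' := by
            rw [Finset.sum_apply]
            exact Finset.sum_congr rfl fun q _ => rfl
    rw [key2]
    exact Submodule.sum_mem _ fun q hq =>
      Submodule.smul_mem _ _ (Submodule.subset_span ⟨q, hq, rfl⟩)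
  have hspan : Submodule.span K (⇑Φ '' ↑t) = ⊤ := by
    rw [eq_top_iff, ← (Pi.basisFun K {m // m ∈ Gs}).span_eq, Submodule.span_le]
    rintro x ⟨g, rfl⟩
    rw [Pi.basisFun_apply]
    exact hsingle g
  have h2 : Module.finrank K ({m // m ∈ Gs} → K) ≤ (t.image ⇑Φ).card := by
    have := finrank_span_finset_le_card (R := K) (t.image ⇑Φ)
    rwa [Set.finrank, Finset.coe_image, hspan, finrank_top] at this
  calc 2 ^ (n - 1) + 1 = Gs.card := hGs_card.symm
    _ = Module.finrank K ({m // m ∈ Gs} → K) := by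
        rw [Module.finrank_pi, Fintype.card_coe]
    _ ≤ (t.image ⇑Φ).card := h2
    _ ≤ t.card := Finset.card_image_le

end Lower

/-- For the bipartite graph `G` with edges `{x_1,y_j}` (all `j`) and
`{x_i,y_i}` (`i ≥ 2`), the minimal number of generators of the cover ideal is `2^(n-1) + 1`. -/
theorem mu_coverIdeal_bipartiteFan (K : Type) [Field K] (n : ℕ) (hn : 1 ≤ n) :
    muIdeal (coverIdeal K (bipartiteFan n)) = 2 ^ (n - 1) + 1 := by
  haveI : NeZero n := ⟨by omega⟩
  have hmem : 2 ^ (n - 1) + 1 ∈ {k | ∃ s : Finset (MvPolynomial (Fin n ⊕ Fin n) K),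
      s.card = k ∧ Ideal.span (s : Set (MvPolynomial (Fin n ⊕ Fin n) K)) =
        coverIdeal K (bipartiteFan n)} :=
    ⟨GS n K, card_GS K, span_GS K⟩
  apply le_antisymm
  · exact Nat.sInf_le hmem
  · refine le_csInf ⟨_, hmem⟩ ?_
    rintro k ⟨t, rfl, hspan⟩
    exact lower_bound hspan
end

section
/- Let G be the bipartite graph with V(G) = {x_1,...,x_n, y_1,...,y_n} and E(G) = {{x_1,y_j} : 1 ≤ j ≤ n} ∪ {{x_i,y_i} : 2 ≤ i ≤ n}, and let J_G ⊂ R = K[x_1,...,x_n,y_1,...,y_n] be its cover ideal. Then J_G is generated in degree n and has linear quotients. -/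
open MvPolynomial

section BipFanAux

open Finset MvPolynomial

/-! ### Bit manipulation -/

def decSet (n k : ℕ) : Finset (Fin n) :=
  Finset.univ.filter fun i => i.val ≠ 0 ∧ Nat.testBit k (i.val - 1)

lemma mem_decSet {n k : ℕ} {i : Fin n} :
    i ∈ decSet n k ↔ i.val ≠ 0 ∧ Nat.testBit k (i.val - 1) := by
  simp [decSet]

lemma testBit_xor_pow (k b c : ℕ) :
    Nat.testBit (k ^^^ 2 ^ b) c = if b = c then !(Nat.testBit k c) else Nat.testBit k c := by
  rw [Nat.testBit_xor]
  by_cases h : b = c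
  · subst h; simp [Nat.testBit_two_pow_self, Bool.xor_comm]
  · simp [Nat.testBit_two_pow_of_ne h, h]

lemma decSet_xor_mem {n k : ℕ} {i : Fin n} (hi : i ∈ decSet n k) :
    decSet n (k ^^^ 2 ^ (i.val - 1)) = (decSet n k).erase i := by
  obtain ⟨hi0, hib⟩ := mem_decSet.mp hi
  ext j
  rw [mem_decSet, Finset.mem_erase, mem_decSet, testBit_xor_pow]
  by_cases hj0 : j.val = 0
  · simp [hj0]
  · by_cases hij : j = i
    · subst hij
      rw [if_pos rfl, hib]
      simp
    · rw [if_neg (fun h => hij (Fin.ext (by omega)))]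
      tauto

lemma decSet_xor_not_mem {n k : ℕ} {i : Fin n} (hi0 : i.val ≠ 0) (hi : i ∉ decSet n k) :
    decSet n (k ^^^ 2 ^ (i.val - 1)) = insert i (decSet n k) := by
  ext j
  rw [mem_decSet, Finset.mem_insert, mem_decSet, testBit_xor_pow]
  by_cases hj0 : j.val = 0
  · have hji : j ≠ i := fun h => hi0 (h ▸ hj0)
    simp [hj0, hji]
  · by_cases hij : j = i
    · subst hij
      have hib : Nat.testBit k (j.val - 1) = false := by
        by_contra h
        exact hi (mem_decSet.mpr ⟨hi0, by simpa using h⟩)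
      rw [if_pos rfl, hib]
      simp [hi0]
    · rw [if_neg (fun h => hij (Fin.ext (by omega)))]
      tauto

lemma xor_pow_lt {n k : ℕ} {i : Fin n} (hk : k < 2 ^ (n - 1)) (hi0 : i.val ≠ 0) :
    k ^^^ 2 ^ (i.val - 1) < 2 ^ (n - 1) := by
  have := i.isLt
  exact Nat.xor_lt_two_pow hk (Nat.pow_lt_pow_right (by norm_num) (by omega))

lemma xor_pow_lt_self {k b : ℕ} (hb : Nat.testBit k b = true) : k ^^^ 2 ^ b < k := by
  apply Nat.lt_of_testBit b
  · rw [testBit_xor_pow, if_pos rfl, hb]; rfl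
  · exact hb
  · intro j hj
    rw [testBit_xor_pow, if_neg (by omega)]

lemma testBit_lt_of_lt {n k b : ℕ} (hk : k < 2 ^ (n - 1)) (h : Nat.testBit k b = true) :
    b < n - 1 := by
  by_contra hb
  rw [Nat.testBit_lt_two_pow
    (lt_of_lt_of_le hk (Nat.pow_le_pow_right (by norm_num) (by omega)))] at h
  simp at h

lemma decSet_eq_empty {n k : ℕ} (hk : k < 2 ^ (n - 1)) (h : decSet n k = ∅) : k = 0 := by
  apply Nat.eq_of_testBit_eq
  intro b
  rw [Nat.zero_testBit]
  by_contra hbit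
  rw [Bool.not_eq_false] at hbit
  have hb : b < n - 1 := testBit_lt_of_lt hk hbit
  have hbn : b + 1 < n := by omega
  have : (⟨b + 1, hbn⟩ : Fin n) ∈ decSet n k :=
    mem_decSet.mpr ⟨by simp, by simpa using hbit⟩
  rw [h] at this
  exact absurd this (Finset.notMem_empty _)

lemma exists_testBit_of_lt {k' k : ℕ} (h : k' < k) :
    ∃ b, Nat.testBit k b = true ∧ Nat.testBit k' b = false := by
  by_contra hc
  push_neg at hc
  have hand : k &&& k' = k := Nat.eq_of_testBit_eq fun b => by
    rw [Nat.testBit_and]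
    cases hb : Nat.testBit k b with
    | false => simp
    | true =>
      have h2 : k'.testBit b = true := by
        cases hcb : k'.testBit b
        · exact absurd hcb (hc b hb)
        · rfl
      simp [h2]
  have hle : k ≤ k' := hand ▸ Nat.and_le_right
  omega

lemma exists_decSet {n : ℕ} :
    ∀ S : Finset (Fin n), (∀ i ∈ S, i.val ≠ 0) →
      ∃ k, k < 2 ^ (n - 1) ∧ decSet n k = S := by
  intro S
  induction S using Finset.induction_on with
  | empty =>
    intro _
    refine ⟨0, by positivity, ?_⟩
    ext i
    simp [mem_decSet, Nat.zero_testBit]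
  | @insert a s ha ih =>
    intro hS
    obtain ⟨k, hk, hdk⟩ := ih fun i hi => hS i (Finset.mem_insert_of_mem hi)
    have ha0 : a.val ≠ 0 := hS a (Finset.mem_insert_self a s)
    exact ⟨k ^^^ 2 ^ (a.val - 1), xor_pow_lt hk ha0, by
      rw [decSet_xor_not_mem ha0 (hdk ▸ ha), hdk]⟩

/-! ### Covers -/

variable {n : ℕ}

def coverSet [NeZero n] (S : Finset (Fin n)) : Finset (Fin n ⊕ Fin n) :=
  (insert 0 S).image Sum.inl ∪ ((insert 0 S)ᶜ).image Sum.inr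

def coverY (n : ℕ) : Finset (Fin n ⊕ Fin n) := Finset.univ.image Sum.inr

lemma mem_coverSet_inl [NeZero n] {S : Finset (Fin n)} {i : Fin n} :
    Sum.inl i ∈ coverSet S ↔ i = 0 ∨ i ∈ S := by
  simp [coverSet]

lemma mem_coverSet_inr [NeZero n] {S : Finset (Fin n)} {i : Fin n} :
    Sum.inr i ∈ coverSet S ↔ ¬(i = 0 ∨ i ∈ S) := by
  simp [coverSet, not_or]

lemma mem_coverY_inr {i : Fin n} : Sum.inr i ∈ coverY n := by simp [coverY]

lemma not_mem_coverY_inl {i : Fin n} : Sum.inl i ∉ coverY n := by simp [coverY]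

lemma isCover_coverY : IsVertexCover (bipartiteFan n) (coverY n) := by
  intro a b hab
  rw [bipartiteFan, SimpleGraph.fromRel_adj] at hab
  obtain ⟨-, ⟨i, j, rfl, rfl, -⟩ | ⟨i, j, rfl, rfl, -⟩⟩ := hab
  · exact Or.inr mem_coverY_inr
  · exact Or.inl mem_coverY_inr

lemma coverSet_core [NeZero n] (S : Finset (Fin n)) {i j : Fin n}
    (h : i.val = 0 ∨ i = j) :
    Sum.inl i ∈ coverSet S ∨ Sum.inr j ∈ coverSet S := by
  rcases h with h | rfl
  · exact Or.inl (mem_coverSet_inl.mpr (Or.inl (Fin.ext (by simpa using h))))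
  · by_cases hj : i = 0 ∨ i ∈ S
    · exact Or.inl (mem_coverSet_inl.mpr hj)
    · exact Or.inr (mem_coverSet_inr.mpr hj)

lemma isCover_coverSet [NeZero n] (S : Finset (Fin n)) :
    IsVertexCover (bipartiteFan n) (coverSet S) := by
  intro a b hab
  rw [bipartiteFan, SimpleGraph.fromRel_adj] at hab
  obtain ⟨-, ⟨i, j, rfl, rfl, h⟩ | ⟨i, j, rfl, rfl, h⟩⟩ := hab
  · exact coverSet_core S h
  · exact (coverSet_core S h).symm

lemma card_coverY : (coverY n).card = n := by
  rw [coverY, Finset.card_image_of_injective _ Sum.inr_injective]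
  simp

lemma card_coverSet [NeZero n] (S : Finset (Fin n)) : (coverSet S).card = n := by
  rw [coverSet, Finset.card_union_of_disjoint (by simp [Finset.disjoint_left])]
  rw [Finset.card_image_of_injective _ Sum.inl_injective,
    Finset.card_image_of_injective _ Sum.inr_injective, Finset.card_compl]
  have := Finset.card_le_univ (insert 0 S)
  simp only [Finset.card_univ, Fintype.card_fin] at *
  omega

/-! ### Monomials -/

noncomputable def expOf {σ : Type} (w : Finset σ) : σ →₀ ℕ := ∑ x ∈ w, Finsupp.single x 1

lemma expOf_apply {σ : Type} [DecidableEq σ] (w : Finset σ) (v : σ) :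
    expOf w v = if v ∈ w then 1 else 0 := by
  classical
  rw [expOf, Finset.sum_apply']
  simp [Finsupp.single_apply]

lemma prod_X_eq {K : Type} [Field K] {σ : Type} (w : Finset σ) :
    (∏ x ∈ w, X x : MvPolynomial σ K) = monomial (expOf w) 1 := by
  classical
  induction w using Finset.induction_on with
  | empty => simp [expOf]
  | @insert a s ha ih =>
    rw [Finset.prod_insert ha, ih]
    simp only [expOf]
    rw [Finset.sum_insert ha, monomial_single_add, pow_one]

/-! ### The generators -/

def csetOf (n : ℕ) [NeZero n] (j : Fin (2 ^ (n - 1) + 1)) : Finset (Fin n ⊕ Fin n) :=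
  if j.val = 0 then coverY n else coverSet (decSet n (j.val - 1))

noncomputable def gens (K : Type) [Field K] (n : ℕ) [NeZero n] :
    Fin (2 ^ (n - 1) + 1) → MvPolynomial (Fin n ⊕ Fin n) K :=
  fun j => ∏ x ∈ csetOf n j, X x

lemma isCover_csetOf [NeZero n] (j : Fin (2 ^ (n - 1) + 1)) :
    IsVertexCover (bipartiteFan n) (csetOf n j) := by
  rw [csetOf]
  split
  · exact isCover_coverY
  · exact isCover_coverSet _

lemma card_csetOf [NeZero n] (j : Fin (2 ^ (n - 1) + 1)) : (csetOf n j).card = n := by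
  rw [csetOf]
  split
  · exact card_coverY
  · exact card_coverSet _

lemma gens_homogeneous (K : Type) [Field K] [NeZero n] (j : Fin (2 ^ (n - 1) + 1)) :
    (gens K n j).IsHomogeneous n := by
  have h := MvPolynomial.IsHomogeneous.prod (csetOf n j)
    (fun x => (X x : MvPolynomial (Fin n ⊕ Fin n) K)) (fun _ => 1)
    (fun i _ => isHomogeneous_X _ _)
  simpa [gens, Finset.sum_const, card_csetOf] using h

lemma span_gens (K : Type) [Field K] [NeZero n] :
    Ideal.span (Set.range (gens K n)) = coverIdeal K (bipartiteFan n) := by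
  apply le_antisymm
  · rw [Ideal.span_le]
    rintro p ⟨j, rfl⟩
    exact Ideal.subset_span ⟨csetOf n j, isCover_csetOf j, rfl⟩
  · rw [coverIdeal, Ideal.span_le]
    rintro p ⟨w, hw, rfl⟩
    obtain ⟨j, hj⟩ : ∃ j, csetOf n j ⊆ w := by
      by_cases h0 : Sum.inl (0 : Fin n) ∈ w
      · set S : Finset (Fin n) :=
          Finset.univ.filter (fun i => i.val ≠ 0 ∧ Sum.inr i ∉ w) with hS
        obtain ⟨k, hk, hdk⟩ := exists_decSet S (fun i hi => by
          simp only [hS, Finset.mem_filter] at hi; exact hi.2.1)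
        refine ⟨⟨k + 1, by omega⟩, ?_⟩
        have hcs : csetOf n ⟨k + 1, by omega⟩ = coverSet S := by
          rw [csetOf]; simp [hdk]
        rw [hcs]
        intro v hv
        rcases v with i | i
        · rcases mem_coverSet_inl.mp hv with rfl | hiS
          · exact h0
          · simp only [hS, Finset.mem_filter] at hiS
            have hadj : (bipartiteFan n).Adj (Sum.inl i) (Sum.inr i) := by
              rw [bipartiteFan, SimpleGraph.fromRel_adj]
              exact ⟨by simp, Or.inl ⟨i, i, rfl, rfl, Or.inr rfl⟩⟩
            rcases hw hadj with h | h
            · exact h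
            · exact absurd h hiS.2.2
        · have hi := mem_coverSet_inr.mp hv
          rw [not_or] at hi
          by_contra hiw
          refine hi.2 ?_
          simp only [hS, Finset.mem_filter]
          exact ⟨Finset.mem_univ _, fun h => hi.1 (Fin.ext (by simpa using h)), hiw⟩
      · refine ⟨0, ?_⟩
        have hcs : csetOf n (0 : Fin (2 ^ (n - 1) + 1)) = coverY n := by
          rw [csetOf]; simp
        rw [hcs]
        intro v hv
        rw [coverY, Finset.mem_image] at hv
        obtain ⟨i, -, rfl⟩ := hv
        have hadj : (bipartiteFan n).Adj (Sum.inl 0) (Sum.inr i) := by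
          rw [bipartiteFan, SimpleGraph.fromRel_adj]
          exact ⟨by simp, Or.inl ⟨0, i, rfl, rfl, Or.inl (by simp)⟩⟩
        rcases hw hadj with h | h
        · exact absurd h h0
        · exact h
    have : (∏ x ∈ w, X x : MvPolynomial (Fin n ⊕ Fin n) K) =
        (∏ x ∈ w \ csetOf n j, X x) * gens K n j := by
      rw [gens, Finset.prod_sdiff hj]
    rw [this]
    exact Ideal.mul_mem_left _ _ (Ideal.subset_span ⟨j, rfl⟩)

end BipFanAux

section BipFanColon

open Finset MvPolynomial

variable {n : ℕ}

lemma insert_swap_zero [NeZero n] :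
    insert (Sum.inr (0 : Fin n)) (coverSet (∅ : Finset (Fin n))) =
      insert (Sum.inl (0 : Fin n)) (coverY n) := by
  ext v
  rcases v with m | m <;> simp [coverSet, coverY] <;> tauto

lemma insert_swap [NeZero n] {S : Finset (Fin n)} {i : Fin n} (hi : i ∈ S) (hi0 : i ≠ 0) :
    insert (Sum.inr i) (coverSet S) = insert (Sum.inl i) (coverSet (S.erase i)) := by
  ext v
  rcases v with m | m <;>
    simp only [Finset.mem_insert, mem_coverSet_inl, mem_coverSet_inr, Finset.mem_erase,
      Sum.inl.injEq, Sum.inr.injEq, not_or, reduceCtorEq, false_or, or_false] <;>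
    by_cases hmi : m = i <;> subst_eqs <;> simp_all <;> tauto

lemma colon_gens (K : Type) [Field K] [NeZero n] (j : Fin (2 ^ (n - 1) + 1)) :
    ∃ T : Set (Fin n ⊕ Fin n),
      Submodule.colon (Ideal.span (gens K n '' {i | i < j})) (Ideal.span {gens K n j}) =
        Ideal.span (MvPolynomial.X '' T) := by
  by_cases hj0 : j.val = 0
  · refine ⟨∅, ?_⟩
    have hempty : {i : Fin (2 ^ (n - 1) + 1) | i < j} = ∅ := by
      ext i
      simp [Fin.lt_def, hj0]
    rw [hempty, Set.image_empty, Set.image_empty, Ideal.span_empty]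
    apply le_antisymm
    · intro r hr
      rw [Submodule.mem_colon] at hr
      have h := hr (gens K n j) (Ideal.subset_span (Set.mem_singleton _))
      rw [smul_eq_mul, Submodule.mem_bot] at h
      have hg : gens K n j ≠ 0 := by
        rw [gens, prod_X_eq]
        simp
      rw [Submodule.mem_bot]
      rcases mul_eq_zero.mp h with h' | h'
      · exact h'
      · exact absurd h' hg
    · exact bot_le
  · -- j = k + 1
    set k : ℕ := j.val - 1 with hkdef
    have hjk : j.val = k + 1 := by omega
    have hk : k < 2 ^ (n - 1) := by have := j.isLt; omega
    have hcj : csetOf n j = coverSet (decSet n k) := by rw [csetOf, if_neg hj0]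
    refine ⟨Sum.inr '' (if decSet n k = ∅ then {0} else ↑(decSet n k)), ?_⟩
    have hgm : ∀ i, gens K n i = monomial (expOf (csetOf n i)) (1 : K) :=
      fun i => prod_X_eq _
    have key : ∀ i', i' < j → ∃ v,
        v ∈ Sum.inr '' (if decSet n k = ∅ then {0} else ↑(decSet n k)) ∧
        expOf (csetOf n i') v = 1 ∧ expOf (csetOf n j) v = 0 := by
      intro i' hi'
      by_cases hi0 : i'.val = 0
      · have hset : csetOf n i' = coverY n := by rw [csetOf, if_pos hi0]
        by_cases hS : decSet n k = ∅
        · refine ⟨Sum.inr 0, ⟨0, by rw [if_pos hS]; rfl, rfl⟩, ?_, ?_⟩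
          · rw [hset, expOf_apply, if_pos mem_coverY_inr]
          · rw [hcj, expOf_apply, if_neg]
            exact fun h => (mem_coverSet_inr.mp h) (Or.inl rfl)
        · obtain ⟨i0, hi0S⟩ := Finset.nonempty_of_ne_empty hS
          refine ⟨Sum.inr i0, ⟨i0, by rw [if_neg hS]; exact hi0S, rfl⟩, ?_, ?_⟩
          · rw [hset, expOf_apply, if_pos mem_coverY_inr]
          · rw [hcj, expOf_apply, if_neg]
            exact fun h => (mem_coverSet_inr.mp h) (Or.inr hi0S)
      · set k' : ℕ := i'.val - 1 with hk'def
        have hk'lt : k' < k := by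
          have := Fin.lt_def.mp hi'
          omega
        have hset : csetOf n i' = coverSet (decSet n k') := by rw [csetOf, if_neg hi0]
        obtain ⟨b, hbk, hbk'⟩ := exists_testBit_of_lt hk'lt
        have hb : b < n - 1 := testBit_lt_of_lt hk hbk
        have hbn : b + 1 < n := by omega
        have hiS : (⟨b + 1, hbn⟩ : Fin n) ∈ decSet n k :=
          mem_decSet.mpr ⟨by simp, by simpa using hbk⟩
        have hiT' : (⟨b + 1, hbn⟩ : Fin n) ∉ decSet n k' := by
          intro h
          have h2 := (mem_decSet.mp h).2
          simp [hbk'] at h2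
        have hSne : decSet n k ≠ ∅ := Finset.ne_empty_of_mem hiS
        have hiz : (⟨b + 1, hbn⟩ : Fin n) ≠ 0 := by
          intro h
          have := congrArg Fin.val h
          simp at this
        refine ⟨Sum.inr ⟨b + 1, hbn⟩, ⟨⟨b + 1, hbn⟩, by rw [if_neg hSne]; exact hiS, rfl⟩, ?_, ?_⟩
        · rw [hset, expOf_apply, if_pos]
          rw [mem_coverSet_inr, not_or]
          exact ⟨hiz, hiT'⟩
        · rw [hcj, expOf_apply, if_neg]
          exact fun h => (mem_coverSet_inr.mp h) (Or.inr hiS)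
    apply le_antisymm
    · intro r hr
      rw [Submodule.mem_colon] at hr
      have hrg : r * gens K n j ∈ Ideal.span (gens K n '' {i | i < j}) := by
        simpa [smul_eq_mul] using hr (gens K n j) (Ideal.subset_span (Set.mem_singleton _))
      have hPim : gens K n '' {i | i < j} =
          (fun s => monomial s (1 : K)) '' ((fun i => expOf (csetOf n i)) '' {i | i < j}) := by
        rw [Set.image_image]
        exact Set.image_congr fun i _ => hgm i
      rw [hPim] at hrg
      rw [mem_ideal_span_X_image]
      intro d hd
      have hco : coeff (d + expOf (csetOf n j)) (r * gens K n j) = coeff d r := by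
        rw [hgm j, coeff_mul_monomial, mul_one]
      have hsup : d + expOf (csetOf n j) ∈ (r * gens K n j).support := by
        rw [mem_support_iff, hco]
        exact mem_support_iff.mp hd
      obtain ⟨e, he, hle⟩ := mem_ideal_span_monomial_image.mp hrg _ hsup
      obtain ⟨i', hi', rfl⟩ := he
      obtain ⟨v, hvT, hv1, hv0⟩ := key i' hi'
      refine ⟨v, hvT, ?_⟩
      have h1 := Finsupp.le_def.mp hle v
      rw [Finsupp.add_apply, hv0, hv1] at h1
      omega
    · rw [Ideal.span_le]
      rintro p ⟨v, hvT, rfl⟩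
      rw [SetLike.mem_coe,
        show Ideal.span ({gens K n j} : Set (MvPolynomial (Fin n ⊕ Fin n) K)) =
          Submodule.span (MvPolynomial (Fin n ⊕ Fin n) K) {gens K n j} from rfl,
        Submodule.mem_colon_span_singleton, smul_eq_mul]
      by_cases hS : decSet n k = ∅
      · rw [if_pos hS] at hvT
        obtain ⟨i0, hi00, rfl⟩ := hvT
        rw [Set.mem_singleton_iff] at hi00
        subst hi00
        have hjset : csetOf n j = coverSet (∅ : Finset (Fin n)) := by rw [hcj, hS]
        have h0j : (0 : Fin (2 ^ (n - 1) + 1)) < j := by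
          rw [Fin.lt_def]
          simp
          have h00 : ((0 : Fin (2 ^ (n - 1) + 1)) : ℕ) = 0 := Fin.val_zero _
          omega
        have hnm1 : Sum.inr (0 : Fin n) ∉ coverSet (∅ : Finset (Fin n)) :=
          fun h => (mem_coverSet_inr.mp h) (Or.inl rfl)
        have hc0 : csetOf n (0 : Fin (2 ^ (n - 1) + 1)) = coverY n := by
          simp [csetOf]
        have heq : X (Sum.inr (0 : Fin n)) * gens K n j =
            X (Sum.inl (0 : Fin n)) * gens K n 0 := by
          rw [gens, gens, hjset, hc0, ← Finset.prod_insert hnm1,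
            ← Finset.prod_insert (not_mem_coverY_inl (i := (0 : Fin n))), insert_swap_zero]
        rw [heq]
        exact Ideal.mul_mem_left _ _ (Ideal.subset_span ⟨0, h0j, rfl⟩)
      · rw [if_neg hS] at hvT
        obtain ⟨i, hiS', rfl⟩ := hvT
        have hiS : i ∈ decSet n k := by simpa using hiS'
        have hi0 : i.val ≠ 0 := (mem_decSet.mp hiS).1
        have hbk : Nat.testBit k (i.val - 1) = true := (mem_decSet.mp hiS).2
        obtain ⟨k', hk'k, hdk'⟩ : ∃ k', k' < k ∧ decSet n k' = (decSet n k).erase i :=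
          ⟨k ^^^ 2 ^ (i.val - 1), xor_pow_lt_self hbk, decSet_xor_mem hiS⟩
        have hbound : k' + 1 < 2 ^ (n - 1) + 1 := by omega
        have hj'lt : (⟨k' + 1, hbound⟩ : Fin (2 ^ (n - 1) + 1)) < j := by
          rw [Fin.lt_def]
          show k' + 1 < j.val
          omega
        have hi0' : i ≠ 0 := by
          intro h
          exact hi0 (by simp [h])
        have hcj' : csetOf n (⟨k' + 1, hbound⟩ : Fin (2 ^ (n - 1) + 1)) =
            coverSet ((decSet n k).erase i) := by
          rw [csetOf, if_neg (by exact Nat.succ_ne_zero k')]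
          show coverSet (decSet n k') = coverSet ((decSet n k).erase i)
          rw [hdk']
        have hnm1 : Sum.inr i ∉ coverSet (decSet n k) :=
          fun h => (mem_coverSet_inr.mp h) (Or.inr hiS)
        have hnm2 : Sum.inl i ∉ coverSet ((decSet n k).erase i) := by
          intro h
          rcases mem_coverSet_inl.mp h with h' | h'
          · exact hi0' h'
          · exact (Finset.notMem_erase i _) h'
        have heq : X (Sum.inr i) * gens K n j =
            X (Sum.inl i) * gens K n (⟨k' + 1, hbound⟩ : Fin (2 ^ (n - 1) + 1)) := by
          rw [gens, gens, hcj, hcj', ← Finset.prod_insert hnm1, ← Finset.prod_insert hnm2,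
            insert_swap hiS hi0']
        rw [heq]
        exact Ideal.mul_mem_left _ _ (Ideal.subset_span ⟨_, hj'lt, rfl⟩)

end BipFanColon

/-- For the bipartite graph `G` with edges `{x_1,y_j}` (all `j`) and
`{x_i,y_i}` (`i ≥ 2`), the cover ideal is generated in degree `n` and has linear quotients. -/
theorem coverIdeal_bipartiteFan_linearQuotients (K : Type) [Field K] (n : ℕ) (hn : 1 ≤ n) :
    (∃ S : Set (MvPolynomial (Fin n ⊕ Fin n) K),
        (∀ p ∈ S, p.IsHomogeneous n) ∧ Ideal.span S = coverIdeal K (bipartiteFan n)) ∧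
    (∃ (ℓ : ℕ) (f : Fin ℓ → MvPolynomial (Fin n ⊕ Fin n) K),
        (∀ j, ∃ d, (f j).IsHomogeneous d) ∧
        Ideal.span (Set.range f) = coverIdeal K (bipartiteFan n) ∧
        ∀ j : Fin ℓ, ∃ T : Set (Fin n ⊕ Fin n),
          Submodule.colon (Ideal.span (f '' {i | i < j})) (Ideal.span {f j}) =
            Ideal.span (MvPolynomial.X '' T)) := by
  haveI : NeZero n := ⟨by omega⟩
  constructor
  · refine ⟨Set.range (gens K n), ?_, span_gens K⟩
    rintro p ⟨j, rfl⟩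
    exact gens_homogeneous K j
  · exact ⟨2 ^ (n - 1) + 1, gens K n, fun j => ⟨n, gens_homogeneous K j⟩,
      span_gens K, fun j => colon_gens K j⟩
end

section
/- Let U = U_1 ⊔ U_2 and V = V_1 ⊔ V_2 be vertex sets with |U| = n, |U_i| = n_i ≥ 1, |V| = m, |V_i| = m_i ≥ 1 (i = 1,2). Let G be the bipartite graph K_{U_1,V} ∪ K_{U_2,V_2} and J_G ⊂ R = K[x_1,...,x_n,y_1,...,y_m] its cover ideal. Then the graded minimal free resolution of R/J_G has the form 0 → R(−n−m_2) ⊕ R(−m−n_1) → R(−(n_1+m_2)) ⊕ R(−m) ⊕ R(−n) → R → 0; in particular reg(J_G) = max{ n + m_2 − 1, m + n_1 − 1 }. -/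
open MvPolynomial

/-! ### Auxiliary material for the proof -/

section MonomialAux
open MvPolynomial
variable {K : Type} [Field K] {σ : Type}

lemma prod_X_eq_monomial [DecidableEq σ] (S : Finset σ) :
    (∏ i ∈ S, X i : MvPolynomial σ K) = monomial (∑ i ∈ S, Finsupp.single i 1) 1 := by
  classical
  induction S using Finset.induction_on with
  | empty => simp
  | @insert a s h ih =>
      rw [Finset.prod_insert h, Finset.sum_insert h, ih, X, monomial_mul, one_mul]

lemma monomial_one_dvd_iff' (s : σ →₀ ℕ) (f : MvPolynomial σ K) :
    monomial s 1 ∣ f ↔ ∀ m : σ →₀ ℕ, ¬ s ≤ m → coeff m f = 0 := by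
  constructor
  · rintro ⟨q, rfl⟩ m hm
    rw [coeff_monomial_mul']
    simp [hm]
  · intro h
    rw [monomial_one_dvd_iff_modMonomial_eq_zero]
    ext m
    by_cases hm : s ≤ m
    · simp [coeff_modMonomial_of_le _ hm]
    · simp [coeff_modMonomial_of_not_le _ hm, h m hm]

lemma prod_X_dvd_of_dvd_mul [DecidableEq σ] {S T : Finset σ} (hST : Disjoint S T)
    {f : MvPolynomial σ K}
    (h : (∏ i ∈ S, X i) ∣ f * ∏ i ∈ T, X i) : (∏ i ∈ S, X i) ∣ f := by
  classical
  rw [prod_X_eq_monomial] at h ⊢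
  set s := ∑ i ∈ S, Finsupp.single i 1 with hs
  set t := ∑ i ∈ T, Finsupp.single i 1 with ht
  have hsv : ∀ j, s j = if j ∈ S then 1 else 0 := by
    intro j
    rw [hs, Finsupp.finset_sum_apply]
    simp [Finsupp.single_apply, Finset.sum_ite_eq' S j (fun _ => 1)]
  have htv : ∀ j, t j = if j ∈ T then 1 else 0 := by
    intro j
    rw [ht, Finsupp.finset_sum_apply]
    simp [Finsupp.single_apply, Finset.sum_ite_eq' T j (fun _ => 1)]
  rw [prod_X_eq_monomial, ← ht] at h
  rw [monomial_one_dvd_iff'] at h ⊢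
  intro m hm
  have key : ¬ s ≤ m + t := by
    intro hle
    apply hm
    rw [Finsupp.le_def] at hle ⊢
    intro j
    have := hle j
    rw [Finsupp.add_apply] at this
    by_cases hj : j ∈ S
    · have hjT : j ∉ T := fun hT => (Finset.disjoint_left.mp hST hj) hT
      simpa [htv j, hjT] using this
    · simp [hsv j, hj]
  have := h (m + t) key
  rw [coeff_mul_monomial'] at this
  simpa using this

lemma prod_X_ne_zero (S : Finset σ) : (∏ i ∈ S, X i : MvPolynomial σ K) ≠ 0 := by
  apply Finset.prod_ne_zero_iff.mpr
  intro i _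
  exact X_ne_zero i

lemma prod_X_isHomogeneous (S : Finset σ) :
    ((∏ i ∈ S, X i : MvPolynomial σ K)).IsHomogeneous S.card := by
  have := IsHomogeneous.prod S (fun i => (X i : MvPolynomial σ K)) (fun _ => 1)
    (fun i _ => isHomogeneous_X K i)
  simpa using this

lemma constantCoeff_prod_X {S : Finset σ} (hS : S.Nonempty) :
    constantCoeff (∏ i ∈ S, X i : MvPolynomial σ K) = 0 := by
  obtain ⟨i, hi⟩ := hS
  rw [map_prod]
  exact Finset.prod_eq_zero hi (constantCoeff_X (R := K) i)

end MonomialAux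

section TBB
open MvPolynomial

variable (n₁ n₂ m₁ m₂ : ℕ)

def FA : Finset (Fin (n₁ + n₂) ⊕ Fin (m₁ + m₂)) :=
  (Finset.univ.filter fun i : Fin (n₁+n₂) => (i:ℕ) < n₁).map ⟨Sum.inl, Sum.inl_injective⟩
def FB : Finset (Fin (n₁ + n₂) ⊕ Fin (m₁ + m₂)) :=
  (Finset.univ.filter fun i : Fin (n₁+n₂) => ¬ (i:ℕ) < n₁).map ⟨Sum.inl, Sum.inl_injective⟩
def FC : Finset (Fin (n₁ + n₂) ⊕ Fin (m₁ + m₂)) :=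
  (Finset.univ.filter fun j : Fin (m₁+m₂) => (j:ℕ) < m₁).map ⟨Sum.inr, Sum.inr_injective⟩
def FD : Finset (Fin (n₁ + n₂) ⊕ Fin (m₁ + m₂)) :=
  (Finset.univ.filter fun j : Fin (m₁+m₂) => ¬ (j:ℕ) < m₁).map ⟨Sum.inr, Sum.inr_injective⟩

variable {n₁ n₂ m₁ m₂}

lemma mem_FA {v : Fin (n₁ + n₂) ⊕ Fin (m₁ + m₂)} :
    v ∈ FA n₁ n₂ m₁ m₂ ↔ ∃ i : Fin (n₁+n₂), v = Sum.inl i ∧ (i:ℕ) < n₁ := by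
  simp [FA, eq_comm, and_comm]
lemma mem_FB {v : Fin (n₁ + n₂) ⊕ Fin (m₁ + m₂)} :
    v ∈ FB n₁ n₂ m₁ m₂ ↔ ∃ i : Fin (n₁+n₂), v = Sum.inl i ∧ ¬ (i:ℕ) < n₁ := by
  simp [FB, eq_comm, and_comm]
lemma mem_FC {v : Fin (n₁ + n₂) ⊕ Fin (m₁ + m₂)} :
    v ∈ FC n₁ n₂ m₁ m₂ ↔ ∃ j : Fin (m₁+m₂), v = Sum.inr j ∧ (j:ℕ) < m₁ := by
  simp [FC, eq_comm, and_comm]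
lemma mem_FD {v : Fin (n₁ + n₂) ⊕ Fin (m₁ + m₂)} :
    v ∈ FD n₁ n₂ m₁ m₂ ↔ ∃ j : Fin (m₁+m₂), v = Sum.inr j ∧ ¬ (j:ℕ) < m₁ := by
  simp [FD, eq_comm, and_comm]

lemma card_filter_lt (a b : ℕ) :
    ((Finset.univ : Finset (Fin (a+b))).filter fun i : Fin (a+b) => (i:ℕ) < a).card = a := by
  have : ((Finset.univ : Finset (Fin (a+b))).filter fun i : Fin (a+b) => (i:ℕ) < a) =
      Finset.map (Fin.castAddEmb b) Finset.univ := by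
    ext j
    simp only [Finset.mem_filter, Finset.mem_univ, true_and, Finset.mem_map]
    constructor
    · intro hj; exact ⟨⟨(j:ℕ), hj⟩, by simp [Fin.castAddEmb, Fin.castLEEmb, Fin.ext_iff]⟩
    · rintro ⟨i, rfl⟩
      simpa [Fin.castAddEmb, Fin.castLEEmb] using i.2
  rw [this, Finset.card_map, Finset.card_univ, Fintype.card_fin]

lemma card_filter_not_lt (a b : ℕ) :
    ((Finset.univ : Finset (Fin (a+b))).filter fun i : Fin (a+b) => ¬ (i:ℕ) < a).card = b := by
  have h := Finset.card_filter_add_card_filter_not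
    (s := (Finset.univ : Finset (Fin (a+b)))) (p := fun i : Fin (a+b) => (i:ℕ) < a)
  rw [card_filter_lt, Finset.card_univ, Fintype.card_fin] at h
  omega

lemma card_FA : (FA n₁ n₂ m₁ m₂).card = n₁ := by rw [FA, Finset.card_map, card_filter_lt]
lemma card_FB : (FB n₁ n₂ m₁ m₂).card = n₂ := by rw [FB, Finset.card_map, card_filter_not_lt]
lemma card_FC : (FC n₁ n₂ m₁ m₂).card = m₁ := by rw [FC, Finset.card_map, card_filter_lt]
lemma card_FD : (FD n₁ n₂ m₁ m₂).card = m₂ := by rw [FD, Finset.card_map, card_filter_not_lt]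

lemma disj_AB : Disjoint (FA n₁ n₂ m₁ m₂) (FB n₁ n₂ m₁ m₂) := by
  rw [Finset.disjoint_left]
  rintro v hA hB
  rw [mem_FA] at hA; rw [mem_FB] at hB
  obtain ⟨i, rfl, hi⟩ := hA; obtain ⟨i', hi', h⟩ := hB
  cases hi'; exact h hi
lemma disj_CD : Disjoint (FC n₁ n₂ m₁ m₂) (FD n₁ n₂ m₁ m₂) := by
  rw [Finset.disjoint_left]
  rintro v hA hB
  rw [mem_FC] at hA; rw [mem_FD] at hB
  obtain ⟨i, rfl, hi⟩ := hA; obtain ⟨i', hi', h⟩ := hB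
  cases hi'; exact h hi
lemma disj_AD : Disjoint (FA n₁ n₂ m₁ m₂) (FD n₁ n₂ m₁ m₂) := by
  rw [Finset.disjoint_left]
  rintro v hA hB
  rw [mem_FA] at hA; rw [mem_FD] at hB
  obtain ⟨i, rfl, hi⟩ := hA; obtain ⟨i', hi', h⟩ := hB
  exact absurd hi' (by simp)
lemma disj_D_AB : Disjoint (FD n₁ n₂ m₁ m₂) (FA n₁ n₂ m₁ m₂ ∪ FB n₁ n₂ m₁ m₂) := by
  rw [Finset.disjoint_right]
  rintro v hv hD
  rw [mem_FD] at hD; obtain ⟨j, rfl, _⟩ := hD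
  rw [Finset.mem_union, mem_FA, mem_FB] at hv
  rcases hv with ⟨i, h, _⟩ | ⟨i, h, _⟩ <;> exact absurd h (by simp)
lemma disj_AC : Disjoint (FA n₁ n₂ m₁ m₂) (FC n₁ n₂ m₁ m₂) := by
  rw [Finset.disjoint_left]
  rintro v hA hB
  rw [mem_FA] at hA; rw [mem_FC] at hB
  obtain ⟨i, rfl, hi⟩ := hA; obtain ⟨i', hi', h⟩ := hB
  exact absurd hi' (by simp)

lemma nonempty_FA (h : 1 ≤ n₁) : (FA n₁ n₂ m₁ m₂).Nonempty :=
  Finset.card_pos.mp (by rw [card_FA]; omega)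
lemma nonempty_FB (h : 1 ≤ n₂) : (FB n₁ n₂ m₁ m₂).Nonempty :=
  Finset.card_pos.mp (by rw [card_FB]; omega)
lemma nonempty_FC (h : 1 ≤ m₁) : (FC n₁ n₂ m₁ m₂).Nonempty :=
  Finset.card_pos.mp (by rw [card_FC]; omega)
lemma nonempty_FD (h : 1 ≤ m₂) : (FD n₁ n₂ m₁ m₂).Nonempty :=
  Finset.card_pos.mp (by rw [card_FD]; omega)

lemma adj_iff {i : Fin (n₁+n₂)} {j : Fin (m₁+m₂)} :
    (twoBlockBipartite n₁ n₂ m₁ m₂).Adj (Sum.inl i) (Sum.inr j) ↔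
      ((i:ℕ) < n₁ ∨ (n₁ ≤ (i:ℕ) ∧ m₁ ≤ (j:ℕ))) := by
  rw [twoBlockBipartite, SimpleGraph.fromRel_adj]
  constructor
  · rintro ⟨-, ⟨i', j', hi, hj, h⟩ | ⟨i', j', hi, hj, h⟩⟩
    · cases hi; cases hj; exact h
    · exact absurd hi (by simp)
  · intro h
    exact ⟨by simp, Or.inl ⟨i, j, rfl, rfl, h⟩⟩

lemma not_adj_inl {i i' : Fin (n₁+n₂)} :
    ¬ (twoBlockBipartite n₁ n₂ m₁ m₂).Adj (Sum.inl i) (Sum.inl i') := by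
  rw [twoBlockBipartite, SimpleGraph.fromRel_adj]
  rintro ⟨-, ⟨_, _, -, h, -⟩ | ⟨_, _, -, h, -⟩⟩ <;> exact absurd h (by simp)

lemma not_adj_inr {j j' : Fin (m₁+m₂)} :
    ¬ (twoBlockBipartite n₁ n₂ m₁ m₂).Adj (Sum.inr j) (Sum.inr j') := by
  rw [twoBlockBipartite, SimpleGraph.fromRel_adj]
  rintro ⟨-, ⟨_, _, h, -⟩ | ⟨_, _, h, -⟩⟩ <;> exact absurd h (by simp)

lemma cover_S1 : IsVertexCover (twoBlockBipartite n₁ n₂ m₁ m₂)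
    (FA n₁ n₂ m₁ m₂ ∪ FD n₁ n₂ m₁ m₂) := by
  have key : ∀ (i : Fin (n₁+n₂)) (j : Fin (m₁+m₂)),
      (twoBlockBipartite n₁ n₂ m₁ m₂).Adj (Sum.inl i) (Sum.inr j) →
      Sum.inl i ∈ FA n₁ n₂ m₁ m₂ ∪ FD n₁ n₂ m₁ m₂ ∨
      Sum.inr j ∈ FA n₁ n₂ m₁ m₂ ∪ FD n₁ n₂ m₁ m₂ := by
    intro i j hadj
    rw [adj_iff] at hadj
    rcases hadj with h | ⟨h1, h2⟩
    · exact Or.inl (Finset.mem_union_left _ (mem_FA.mpr ⟨i, rfl, h⟩))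
    · exact Or.inr (Finset.mem_union_right _ (mem_FD.mpr ⟨j, rfl, by omega⟩))
  rintro (i | j) (i' | j') hadj
  · exact absurd hadj not_adj_inl
  · exact key i j' hadj
  · exact (key i' j hadj.symm).symm
  · exact absurd hadj not_adj_inr

lemma cover_S2 : IsVertexCover (twoBlockBipartite n₁ n₂ m₁ m₂)
    (FC n₁ n₂ m₁ m₂ ∪ FD n₁ n₂ m₁ m₂) := by
  have key : ∀ j : Fin (m₁+m₂), Sum.inr j ∈ FC n₁ n₂ m₁ m₂ ∪ FD n₁ n₂ m₁ m₂ := by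
    intro j
    by_cases h : (j:ℕ) < m₁
    · exact Finset.mem_union_left _ (mem_FC.mpr ⟨j, rfl, h⟩)
    · exact Finset.mem_union_right _ (mem_FD.mpr ⟨j, rfl, h⟩)
  rintro (i | j) (i' | j') hadj
  · exact absurd hadj not_adj_inl
  · exact Or.inr (key j')
  · exact Or.inl (key j)
  · exact absurd hadj not_adj_inr

lemma cover_S3 : IsVertexCover (twoBlockBipartite n₁ n₂ m₁ m₂)
    (FA n₁ n₂ m₁ m₂ ∪ FB n₁ n₂ m₁ m₂) := by
  have key : ∀ i : Fin (n₁+n₂), Sum.inl i ∈ FA n₁ n₂ m₁ m₂ ∪ FB n₁ n₂ m₁ m₂ := by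
    intro i
    by_cases h : (i:ℕ) < n₁
    · exact Finset.mem_union_left _ (mem_FA.mpr ⟨i, rfl, h⟩)
    · exact Finset.mem_union_right _ (mem_FB.mpr ⟨i, rfl, h⟩)
  rintro (i | j) (i' | j') hadj
  · exact absurd hadj not_adj_inl
  · exact Or.inl (key i)
  · exact Or.inr (key i')
  · exact absurd hadj not_adj_inr

lemma cover_cases {w : Finset (Fin (n₁ + n₂) ⊕ Fin (m₁ + m₂))}
    (hw : IsVertexCover (twoBlockBipartite n₁ n₂ m₁ m₂) w) :
    (FA n₁ n₂ m₁ m₂ ∪ FD n₁ n₂ m₁ m₂) ⊆ w ∨ (FC n₁ n₂ m₁ m₂ ∪ FD n₁ n₂ m₁ m₂) ⊆ w ∨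
    (FA n₁ n₂ m₁ m₂ ∪ FB n₁ n₂ m₁ m₂) ⊆ w := by
  by_cases hU : ∀ i : Fin (n₁+n₂), Sum.inl i ∈ w
  · refine Or.inr (Or.inr ?_)
    intro v hv
    rw [Finset.mem_union, mem_FA, mem_FB] at hv
    rcases hv with ⟨i, rfl, _⟩ | ⟨i, rfl, _⟩ <;> exact hU i
  · push_neg at hU
    obtain ⟨i₀, hi₀⟩ := hU
    have hVsub : (∀ j : Fin (m₁+m₂), Sum.inr j ∈ w) →
        (FC n₁ n₂ m₁ m₂ ∪ FD n₁ n₂ m₁ m₂) ⊆ w := by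
      intro hV v hv
      rw [Finset.mem_union, mem_FC, mem_FD] at hv
      rcases hv with ⟨j, rfl, _⟩ | ⟨j, rfl, _⟩ <;> exact hV j
    by_cases hc : (i₀:ℕ) < n₁
    · refine Or.inr (Or.inl (hVsub fun j => ?_))
      have hadj := (adj_iff (i := i₀) (j := j)).mpr (Or.inl hc)
      rcases hw hadj with h | h
      · exact absurd h hi₀
      · exact h
    · have hD : FD n₁ n₂ m₁ m₂ ⊆ w := by
        intro v hv
        rw [mem_FD] at hv
        obtain ⟨j, rfl, hj⟩ := hv
        have hadj := (adj_iff (i := i₀) (j := j)).mpr (Or.inr ⟨by omega, by omega⟩)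
        rcases hw hadj with h | h
        · exact absurd h hi₀
        · exact h
      by_cases hA : FA n₁ n₂ m₁ m₂ ⊆ w
      · exact Or.inl (Finset.union_subset hA hD)
      · rw [Finset.not_subset] at hA
        obtain ⟨v, hv, hvw⟩ := hA
        rw [mem_FA] at hv
        obtain ⟨i₁, rfl, hi₁⟩ := hv
        refine Or.inr (Or.inl (hVsub fun j => ?_))
        have hadj := (adj_iff (i := i₁) (j := j)).mpr (Or.inl hi₁)
        rcases hw hadj with h | h
        · exact absurd h hvw
        · exact h
end TBB

section Res
open MvPolynomial

variable (K : Type) [Field K] (n₁ n₂ m₁ m₂ : ℕ)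

noncomputable def pA : MvPolynomial (Fin (n₁ + n₂) ⊕ Fin (m₁ + m₂)) K := ∏ i ∈ FA n₁ n₂ m₁ m₂, X i
noncomputable def pB : MvPolynomial (Fin (n₁ + n₂) ⊕ Fin (m₁ + m₂)) K := ∏ i ∈ FB n₁ n₂ m₁ m₂, X i
noncomputable def pC : MvPolynomial (Fin (n₁ + n₂) ⊕ Fin (m₁ + m₂)) K := ∏ i ∈ FC n₁ n₂ m₁ m₂, X i
noncomputable def pD : MvPolynomial (Fin (n₁ + n₂) ⊕ Fin (m₁ + m₂)) K := ∏ i ∈ FD n₁ n₂ m₁ m₂, X i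

noncomputable def genTBB : Fin 3 → MvPolynomial (Fin (n₁ + n₂) ⊕ Fin (m₁ + m₂)) K :=
  ![pA K n₁ n₂ m₁ m₂ * pD K n₁ n₂ m₁ m₂, pC K n₁ n₂ m₁ m₂ * pD K n₁ n₂ m₁ m₂,
    pA K n₁ n₂ m₁ m₂ * pB K n₁ n₂ m₁ m₂]

def rkTBB : ℕ → ℕ
  | 1 => 3
  | 2 => 2
  | _ => 0

def degTBB : ∀ i : ℕ, Fin (rkTBB i) → ℕ
  | 0 => Fin.elim0
  | 1 => ![n₁ + m₂, m₁ + m₂, n₁ + n₂]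
  | 2 => ![n₁ + n₂ + m₂, m₁ + m₂ + n₁]
  | (_ + 3) => Fin.elim0

noncomputable def mat0TBB : Matrix (Fin 3) (Fin 2) (MvPolynomial (Fin (n₁ + n₂) ⊕ Fin (m₁ + m₂)) K) :=
  !![pB K n₁ n₂ m₁ m₂, pC K n₁ n₂ m₁ m₂; 0, -pA K n₁ n₂ m₁ m₂; -pD K n₁ n₂ m₁ m₂, 0]

def mat1TBB : Matrix (Fin 2) (Fin 0) (MvPolynomial (Fin (n₁ + n₂) ⊕ Fin (m₁ + m₂)) K) :=
  fun _ => Fin.elim0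

noncomputable def matTBB :
    ∀ i : ℕ, Matrix (Fin (rkTBB (i + 1))) (Fin (rkTBB (i + 2)))
      (MvPolynomial (Fin (n₁ + n₂) ⊕ Fin (m₁ + m₂)) K)
  | 0 => mat0TBB K n₁ n₂ m₁ m₂
  | 1 => mat1TBB K n₁ n₂ m₁ m₂
  | (_ + 2) => Fin.elim0

variable {K n₁ n₂ m₁ m₂}

lemma genTBB_zero : genTBB K n₁ n₂ m₁ m₂ 0 =
    ∏ x ∈ FA n₁ n₂ m₁ m₂ ∪ FD n₁ n₂ m₁ m₂, X x := by
  rw [Finset.prod_union disj_AD]; rfl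
lemma genTBB_one : genTBB K n₁ n₂ m₁ m₂ 1 =
    ∏ x ∈ FC n₁ n₂ m₁ m₂ ∪ FD n₁ n₂ m₁ m₂, X x := by
  rw [Finset.prod_union disj_CD]; rfl
lemma genTBB_two : genTBB K n₁ n₂ m₁ m₂ 2 =
    ∏ x ∈ FA n₁ n₂ m₁ m₂ ∪ FB n₁ n₂ m₁ m₂, X x := by
  rw [Finset.prod_union disj_AB]; rfl

lemma span_genTBB :
    Ideal.span (Set.range (genTBB K n₁ n₂ m₁ m₂)) =
      coverIdeal K (twoBlockBipartite n₁ n₂ m₁ m₂) := by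
  apply le_antisymm
  · rw [Ideal.span_le]
    rintro p ⟨i, rfl⟩
    fin_cases i
    · exact Ideal.subset_span ⟨FA n₁ n₂ m₁ m₂ ∪ FD n₁ n₂ m₁ m₂, cover_S1, genTBB_zero⟩
    · exact Ideal.subset_span ⟨FC n₁ n₂ m₁ m₂ ∪ FD n₁ n₂ m₁ m₂, cover_S2, genTBB_one⟩
    · exact Ideal.subset_span ⟨FA n₁ n₂ m₁ m₂ ∪ FB n₁ n₂ m₁ m₂, cover_S3, genTBB_two⟩
  · rw [coverIdeal, Ideal.span_le]
    rintro p ⟨w, hw, rfl⟩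
    have key : ∀ (S : Finset (Fin (n₁ + n₂) ⊕ Fin (m₁ + m₂))) (i : Fin 3),
        S ⊆ w → genTBB K n₁ n₂ m₁ m₂ i = ∏ x ∈ S, X x →
        (∏ x ∈ w, X x : MvPolynomial _ K) ∈ Ideal.span (Set.range (genTBB K n₁ n₂ m₁ m₂)) := by
      intro S i hS hgen
      rw [← Finset.prod_sdiff hS]
      exact Ideal.mul_mem_left _ _ (hgen ▸ Ideal.subset_span ⟨i, rfl⟩)
    rcases cover_cases hw with h | h | h
    · exact key _ 0 h genTBB_zero
    · exact key _ 1 h genTBB_one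
    · exact key _ 2 h genTBB_two

lemma lcomb_genTBB (y : Fin 3 → MvPolynomial (Fin (n₁ + n₂) ⊕ Fin (m₁ + m₂)) K) :
    lcomb (genTBB K n₁ n₂ m₁ m₂) y =
      y 0 * (pA K n₁ n₂ m₁ m₂ * pD K n₁ n₂ m₁ m₂) +
      y 1 * (pC K n₁ n₂ m₁ m₂ * pD K n₁ n₂ m₁ m₂) +
      y 2 * (pA K n₁ n₂ m₁ m₂ * pB K n₁ n₂ m₁ m₂) := by
  simp [lcomb, Fintype.linearCombination_apply, Fin.sum_univ_three, genTBB, smul_eq_mul]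

lemma mulVec0_TBB (x : Fin 2 → MvPolynomial (Fin (n₁ + n₂) ⊕ Fin (m₁ + m₂)) K) :
    (mat0TBB K n₁ n₂ m₁ m₂).mulVecLin x =
      ![pB K n₁ n₂ m₁ m₂ * x 0 + pC K n₁ n₂ m₁ m₂ * x 1,
        -(pA K n₁ n₂ m₁ m₂ * x 1), -(pD K n₁ n₂ m₁ m₂ * x 0)] := by
  show Matrix.mulVecLin (!![pB K n₁ n₂ m₁ m₂, pC K n₁ n₂ m₁ m₂; 0, -pA K n₁ n₂ m₁ m₂;
      -pD K n₁ n₂ m₁ m₂, 0] : Matrix (Fin 3) (Fin 2) _) x = _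
  funext p
  fin_cases p <;>
    simp [matTBB, Matrix.mulVecLin, Matrix.mulVec, dotProduct, Fin.sum_univ_two] <;>
    ring

end Res

section Exact
open MvPolynomial

variable {K : Type} [Field K] {n₁ n₂ m₁ m₂ : ℕ}

lemma exact_one_TBB :
    Function.Exact
      ⇑((mat0TBB K n₁ n₂ m₁ m₂).mulVecLin)
      ⇑(lcomb (genTBB K n₁ n₂ m₁ m₂)) := by
  intro y
  rw [lcomb_genTBB]
  constructor
  · intro E
    have hd : pD K n₁ n₂ m₁ m₂ ∣ y 2 * (pA K n₁ n₂ m₁ m₂ * pB K n₁ n₂ m₁ m₂) :=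
      ⟨-(y 0 * pA K n₁ n₂ m₁ m₂ + y 1 * pC K n₁ n₂ m₁ m₂), by linear_combination E⟩
    have hd' : (∏ i ∈ FD n₁ n₂ m₁ m₂, X i : MvPolynomial _ K) ∣
        y 2 * ∏ i ∈ FA n₁ n₂ m₁ m₂ ∪ FB n₁ n₂ m₁ m₂, X i := by
      rw [Finset.prod_union disj_AB]; exact hd
    obtain ⟨w2, hw2⟩ := prod_X_dvd_of_dvd_mul disj_D_AB hd'
    have hw2' : y 2 = pD K n₁ n₂ m₁ m₂ * w2 := hw2
    rw [hw2'] at E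
    have E2 : pD K n₁ n₂ m₁ m₂ *
        (y 0 * pA K n₁ n₂ m₁ m₂ + y 1 * pC K n₁ n₂ m₁ m₂ +
          w2 * (pA K n₁ n₂ m₁ m₂ * pB K n₁ n₂ m₁ m₂)) = 0 := by linear_combination E
    have E3 : y 0 * pA K n₁ n₂ m₁ m₂ + y 1 * pC K n₁ n₂ m₁ m₂ +
        w2 * (pA K n₁ n₂ m₁ m₂ * pB K n₁ n₂ m₁ m₂) = 0 := by
      rcases mul_eq_zero.mp E2 with h | h
      · exact absurd h (prod_X_ne_zero _)
      · exact h
    have ha : pA K n₁ n₂ m₁ m₂ ∣ y 1 * pC K n₁ n₂ m₁ m₂ :=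
      ⟨-(y 0 + w2 * pB K n₁ n₂ m₁ m₂), by linear_combination E3⟩
    have ha' : (∏ i ∈ FA n₁ n₂ m₁ m₂, X i : MvPolynomial _ K) ∣
        y 1 * ∏ i ∈ FC n₁ n₂ m₁ m₂, X i := ha
    obtain ⟨u, hu⟩ := prod_X_dvd_of_dvd_mul disj_AC ha'
    have hu' : y 1 = pA K n₁ n₂ m₁ m₂ * u := hu
    rw [hu'] at E3
    have E4 : pA K n₁ n₂ m₁ m₂ *
        (y 0 + u * pC K n₁ n₂ m₁ m₂ + w2 * pB K n₁ n₂ m₁ m₂) = 0 := by linear_combination E3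
    have E5 : y 0 + u * pC K n₁ n₂ m₁ m₂ + w2 * pB K n₁ n₂ m₁ m₂ = 0 := by
      rcases mul_eq_zero.mp E4 with h | h
      · exact absurd h (prod_X_ne_zero _)
      · exact h
    refine ⟨![-w2, -u], ?_⟩
    rw [mulVec0_TBB]
    funext p
    fin_cases p
    · show pB K n₁ n₂ m₁ m₂ * (-w2) + pC K n₁ n₂ m₁ m₂ * (-u) = y 0
      linear_combination -E5
    · show -(pA K n₁ n₂ m₁ m₂ * (-u)) = y 1
      linear_combination -hu'
    · show -(pD K n₁ n₂ m₁ m₂ * (-w2)) = y 2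
      linear_combination -hw2'
  · rintro ⟨x, rfl⟩
    rw [mulVec0_TBB]
    show (pB K n₁ n₂ m₁ m₂ * x 0 + pC K n₁ n₂ m₁ m₂ * x 1) * _ +
      -(pA K n₁ n₂ m₁ m₂ * x 1) * _ + -(pD K n₁ n₂ m₁ m₂ * x 0) * _ = 0
    ring

lemma exact_succ_zero_TBB :
    Function.Exact
      ⇑((mat1TBB K n₁ n₂ m₁ m₂).mulVecLin)
      ⇑((mat0TBB K n₁ n₂ m₁ m₂).mulVecLin) := by
  intro y
  constructor
  · intro hy
    rw [mulVec0_TBB] at hy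
    have h1 : -(pA K n₁ n₂ m₁ m₂ * y 1) = 0 := congrFun hy 1
    have h0 : -(pD K n₁ n₂ m₁ m₂ * y 0) = 0 := congrFun hy 2
    have hy1 : y 1 = 0 := by
      rcases mul_eq_zero.mp (neg_eq_zero.mp h1) with h | h
      · exact absurd h (prod_X_ne_zero _)
      · exact h
    have hy0 : y 0 = 0 := by
      rcases mul_eq_zero.mp (neg_eq_zero.mp h0) with h | h
      · exact absurd h (prod_X_ne_zero _)
      · exact h
    refine ⟨0, ?_⟩
    rw [map_zero]
    funext p
    fin_cases p
    · exact hy0.symm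
    · exact hy1.symm
  · rintro ⟨x, rfl⟩
    have hx : (mat1TBB K n₁ n₂ m₁ m₂).mulVecLin x = 0 := by
      funext p
      simp [mat1TBB, Matrix.mulVecLin, Matrix.mulVec, dotProduct]
    rw [hx, map_zero]

lemma exact_succ_TBB (i : ℕ) :
    Function.Exact ⇑((matTBB K n₁ n₂ m₁ m₂ (i + 1)).mulVecLin)
      ⇑((matTBB K n₁ n₂ m₁ m₂ i).mulVecLin) := by
  rcases i with _ | i
  · exact exact_succ_zero_TBB
  · haveI : IsEmpty (Fin (rkTBB (i + 1 + 2))) := by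
      rw [show rkTBB (i + 1 + 2) = 0 from rfl]
      infer_instance
    intro y
    have hy : y = 0 := funext fun p => (IsEmpty.false p).elim
    subst hy
    constructor
    · intro _
      exact ⟨0, by rw [map_zero]⟩
    · intro _
      rw [map_zero]

end Exact

section HomMin
open MvPolynomial

variable {K : Type} [Field K] {n₁ n₂ m₁ m₂ : ℕ}

lemma pA_hom : (pA K n₁ n₂ m₁ m₂).IsHomogeneous n₁ := by
  have := prod_X_isHomogeneous (K := K) (FA n₁ n₂ m₁ m₂); rwa [card_FA] at this
lemma pB_hom : (pB K n₁ n₂ m₁ m₂).IsHomogeneous n₂ := by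
  have := prod_X_isHomogeneous (K := K) (FB n₁ n₂ m₁ m₂); rwa [card_FB] at this
lemma pC_hom : (pC K n₁ n₂ m₁ m₂).IsHomogeneous m₁ := by
  have := prod_X_isHomogeneous (K := K) (FC n₁ n₂ m₁ m₂); rwa [card_FC] at this
lemma pD_hom : (pD K n₁ n₂ m₁ m₂).IsHomogeneous m₂ := by
  have := prod_X_isHomogeneous (K := K) (FD n₁ n₂ m₁ m₂); rwa [card_FD] at this

lemma gen_hom_TBB (j : Fin 3) :
    (genTBB K n₁ n₂ m₁ m₂ j).IsHomogeneous (degTBB n₁ n₂ m₁ m₂ 1 j) := by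
  fin_cases j
  · show (pA K n₁ n₂ m₁ m₂ * pD K n₁ n₂ m₁ m₂).IsHomogeneous (n₁ + m₂)
    exact pA_hom.mul pD_hom
  · show (pC K n₁ n₂ m₁ m₂ * pD K n₁ n₂ m₁ m₂).IsHomogeneous (m₁ + m₂)
    exact pC_hom.mul pD_hom
  · show (pA K n₁ n₂ m₁ m₂ * pB K n₁ n₂ m₁ m₂).IsHomogeneous (n₁ + n₂)
    exact pA_hom.mul pB_hom

lemma mat_hom_zero_TBB (p : Fin 3) (q : Fin 2) :
    mat0TBB K n₁ n₂ m₁ m₂ p q = 0 ∨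
      (degTBB n₁ n₂ m₁ m₂ 1 p ≤ degTBB n₁ n₂ m₁ m₂ 2 q ∧
        (mat0TBB K n₁ n₂ m₁ m₂ p q).IsHomogeneous
          (degTBB n₁ n₂ m₁ m₂ 2 q - degTBB n₁ n₂ m₁ m₂ 1 p)) := by
  fin_cases p <;> fin_cases q
  · refine Or.inr ⟨by show n₁ + m₂ ≤ n₁ + n₂ + m₂; omega, ?_⟩
    show (pB K n₁ n₂ m₁ m₂).IsHomogeneous (n₁ + n₂ + m₂ - (n₁ + m₂))
    rw [show n₁ + n₂ + m₂ - (n₁ + m₂) = n₂ by omega]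
    exact pB_hom
  · refine Or.inr ⟨by show n₁ + m₂ ≤ m₁ + m₂ + n₁; omega, ?_⟩
    show (pC K n₁ n₂ m₁ m₂).IsHomogeneous (m₁ + m₂ + n₁ - (n₁ + m₂))
    rw [show m₁ + m₂ + n₁ - (n₁ + m₂) = m₁ by omega]
    exact pC_hom
  · exact Or.inl rfl
  · refine Or.inr ⟨by show m₁ + m₂ ≤ m₁ + m₂ + n₁; omega, ?_⟩
    show (-pA K n₁ n₂ m₁ m₂).IsHomogeneous (m₁ + m₂ + n₁ - (m₁ + m₂))
    rw [show m₁ + m₂ + n₁ - (m₁ + m₂) = n₁ by omega]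
    exact pA_hom.neg
  · refine Or.inr ⟨by show n₁ + n₂ ≤ n₁ + n₂ + m₂; omega, ?_⟩
    show (-pD K n₁ n₂ m₁ m₂).IsHomogeneous (n₁ + n₂ + m₂ - (n₁ + n₂))
    rw [show n₁ + n₂ + m₂ - (n₁ + n₂) = m₂ by omega]
    exact pD_hom.neg
  · exact Or.inl rfl

lemma mat_hom_TBB (i : ℕ) (p : Fin (rkTBB (i + 1))) (q : Fin (rkTBB (i + 2))) :
    matTBB K n₁ n₂ m₁ m₂ i p q = 0 ∨
      (degTBB n₁ n₂ m₁ m₂ (i + 1) p ≤ degTBB n₁ n₂ m₁ m₂ (i + 2) q ∧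
        (matTBB K n₁ n₂ m₁ m₂ i p q).IsHomogeneous
          (degTBB n₁ n₂ m₁ m₂ (i + 2) q - degTBB n₁ n₂ m₁ m₂ (i + 1) p)) := by
  match i with
  | 0 => exact mat_hom_zero_TBB p q
  | 1 => exact Fin.elim0 q
  | (k + 2) => exact Fin.elim0 p

lemma cc_pA (h : 1 ≤ n₁) : constantCoeff (pA K n₁ n₂ m₁ m₂) = 0 :=
  constantCoeff_prod_X (nonempty_FA h)
lemma cc_pB (h : 1 ≤ n₂) : constantCoeff (pB K n₁ n₂ m₁ m₂) = 0 :=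
  constantCoeff_prod_X (nonempty_FB h)
lemma cc_pC (h : 1 ≤ m₁) : constantCoeff (pC K n₁ n₂ m₁ m₂) = 0 :=
  constantCoeff_prod_X (nonempty_FC h)
lemma cc_pD (h : 1 ≤ m₂) : constantCoeff (pD K n₁ n₂ m₁ m₂) = 0 :=
  constantCoeff_prod_X (nonempty_FD h)

lemma minimal_gen_TBB (h₁ : 1 ≤ n₁) (h₄ : 1 ≤ m₂) (j : Fin 3) :
    constantCoeff (genTBB K n₁ n₂ m₁ m₂ j) = 0 := by
  fin_cases j
  · show constantCoeff (pA K n₁ n₂ m₁ m₂ * pD K n₁ n₂ m₁ m₂) = 0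
    rw [map_mul, cc_pA h₁, zero_mul]
  · show constantCoeff (pC K n₁ n₂ m₁ m₂ * pD K n₁ n₂ m₁ m₂) = 0
    rw [map_mul, cc_pD h₄, mul_zero]
  · show constantCoeff (pA K n₁ n₂ m₁ m₂ * pB K n₁ n₂ m₁ m₂) = 0
    rw [map_mul, cc_pA h₁, zero_mul]

lemma minimal_mat_zero_TBB (h₁ : 1 ≤ n₁) (h₂ : 1 ≤ n₂) (h₃ : 1 ≤ m₁) (h₄ : 1 ≤ m₂)
    (p : Fin 3) (q : Fin 2) : constantCoeff (mat0TBB K n₁ n₂ m₁ m₂ p q) = 0 := by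
  fin_cases p <;> fin_cases q
  · exact cc_pB h₂
  · exact cc_pC h₃
  · exact map_zero _
  · show constantCoeff (-pA K n₁ n₂ m₁ m₂) = 0
    rw [map_neg, cc_pA h₁, neg_zero]
  · show constantCoeff (-pD K n₁ n₂ m₁ m₂) = 0
    rw [map_neg, cc_pD h₄, neg_zero]
  · exact map_zero _

lemma minimal_mat_TBB (h₁ : 1 ≤ n₁) (h₂ : 1 ≤ n₂) (h₃ : 1 ≤ m₁) (h₄ : 1 ≤ m₂)
    (i : ℕ) (p : Fin (rkTBB (i + 1))) (q : Fin (rkTBB (i + 2))) :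
    constantCoeff (matTBB K n₁ n₂ m₁ m₂ i p q) = 0 := by
  match i with
  | 0 => exact minimal_mat_zero_TBB h₁ h₂ h₃ h₄ p q
  | 1 => exact Fin.elim0 q
  | (k + 2) => exact Fin.elim0 p

lemma rank_pos_TBB (i : ℕ) (h1 : 1 ≤ i) (h2 : i ≤ 2) : 0 < rkTBB i := by
  interval_cases i
  · show 0 < 3; omega
  · show 0 < 2; omega

lemma rank_zero_TBB (i : ℕ) (hi : 2 < i) : rkTBB i = 0 := by
  obtain ⟨k, rfl⟩ : ∃ k, i = k + 3 := ⟨i - 3, by omega⟩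
  rfl

end HomMin

/-- For the bipartite graph `G = K_{U₁,V} ∪ K_{U₂,V₂}`, the graded minimal
free resolution of `R/J_G` is
`0 → R(-n-m₂) ⊕ R(-m-n₁) → R(-(n₁+m₂)) ⊕ R(-m) ⊕ R(-n) → R → 0`,
where `n = n₁ + n₂`, `m = m₁ + m₂`; in particular
`reg(J_G) = max (n + m₂ - 1) (m + n₁ - 1)`. -/
theorem resolution_coverIdeal_twoBlockBipartite (K : Type) [Field K]
    (n₁ n₂ m₁ m₂ : ℕ) (h₁ : 1 ≤ n₁) (h₂ : 1 ≤ n₂) (h₃ : 1 ≤ m₁) (h₄ : 1 ≤ m₂) :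
    ∃ res : MinimalGradedFreeResolution (coverIdeal K (twoBlockBipartite n₁ n₂ m₁ m₂)),
      res.len = 2 ∧ res.rank 1 = 3 ∧ res.rank 2 = 2 ∧
      Finset.univ.val.map (res.deg 1) = ({n₁ + m₂, m₁ + m₂, n₁ + n₂} : Multiset ℕ) ∧
      Finset.univ.val.map (res.deg 2) =
        ({(n₁ + n₂) + m₂, (m₁ + m₂) + n₁} : Multiset ℕ) ∧
      res.regIdeal = max ((n₁ + n₂) + m₂ - 1) ((m₁ + m₂) + n₁ - 1) := by
  refine ⟨⟨2, rkTBB, degTBB n₁ n₂ m₁ m₂, genTBB K n₁ n₂ m₁ m₂, matTBB K n₁ n₂ m₁ m₂,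
    rank_pos_TBB, rank_zero_TBB, span_genTBB, gen_hom_TBB, mat_hom_TBB, exact_one_TBB,
    exact_succ_TBB, minimal_gen_TBB h₁ h₄, minimal_mat_TBB h₁ h₂ h₃ h₄⟩,
    rfl, rfl, rfl, ?_, ?_, ?_⟩
  · rfl
  · rfl
  · show Finset.sup (Finset.range 2)
      (fun i => (Finset.univ.sup fun j => degTBB n₁ n₂ m₁ m₂ (i + 1) j) - i) = _
    rw [show Finset.range 2 = {0, 1} from rfl]
    simp only [Finset.sup_insert, Finset.sup_singleton]
    have e1 : (Finset.univ.sup fun j => degTBB n₁ n₂ m₁ m₂ (0 + 1) j) =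
        (n₁ + m₂) ⊔ ((m₁ + m₂) ⊔ (n₁ + n₂)) := by
      show (Finset.univ : Finset (Fin 3)).sup ![n₁ + m₂, m₁ + m₂, n₁ + n₂] = _
      rw [show (Finset.univ : Finset (Fin 3)) = {0, 1, 2} from rfl]
      simp only [Finset.sup_insert, Finset.sup_singleton]
      rfl
    have e2 : (Finset.univ.sup fun j => degTBB n₁ n₂ m₁ m₂ (1 + 1) j) =
        (n₁ + n₂ + m₂) ⊔ (m₁ + m₂ + n₁) := by
      show (Finset.univ : Finset (Fin 2)).sup ![n₁ + n₂ + m₂, m₁ + m₂ + n₁] = _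
      rw [show (Finset.univ : Finset (Fin 2)) = {0, 1} from rfl]
      simp only [Finset.sup_insert, Finset.sup_singleton]
      rfl
    rw [e1, e2]
    show (max (max (n₁ + m₂) (max (m₁ + m₂) (n₁ + n₂)) - 0)
      (max (n₁ + n₂ + m₂) (m₁ + m₂ + n₁) - 1)) =
      max ((n₁ + n₂) + m₂ - 1) ((m₁ + m₂) + n₁ - 1)
    omega
end
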